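/- arXiv:math/0509553 — 2 statements merged into one kernel-verified Lean document; each statement's English description precedes it below -/
import Mathlib

section
/- Let b_μ = sup(supp μ) ∈ (0,∞] and a_μ = inf(supp μ) ∈ [−∞,0). Then the full integrals defining the two branches diverge: ∫_{(0,∞)} [n([s,∞)) · (1 + μ̄(s) − μ̄(G_μ⁻¹(D_μ(s))))]⁻¹ dμ(s) = ∞ and ∫_{(−∞,0)} [n((−∞,s]) · (1 + μ̄(D_μ⁻¹(G_μ(s))) − μ̄(s))]⁻¹ dμ(s) = ∞; in particular ψ₊(y) = ∞ for every y ≥ b_μ and ψ₋(z) = ∞ for every z ≥ −a_μ. -/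
open MeasureTheory Filter
open scoped ENNReal Topology Classical

/-- Topological support of a Borel measure on ℝ. -/
def measSupport (μ : MeasureTheory.Measure ℝ) : Set ℝ :=
  {x | ∀ U : Set ℝ, IsOpen U → x ∈ U → 0 < μ U}

/-- `D_μ(y) = ∫_{[0,y]} n([s,∞))⁻¹ dμ(s)` for `y ≥ 0` (equal to `0` for `y < 0`). -/
noncomputable def Dmu (μ n : MeasureTheory.Measure ℝ) (y : ℝ) : ℝ≥0∞ :=
  ∫⁻ s in Set.Icc (0 : ℝ) y, (n (Set.Ici s))⁻¹ ∂μ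

/-- `G_μ(x) = ∫_{[x,0]} n((−∞,s])⁻¹ dμ(s)` for `x ≤ 0` (equal to `0` for `x > 0`). -/
noncomputable def Gmu (μ n : MeasureTheory.Measure ℝ) (x : ℝ) : ℝ≥0∞ :=
  ∫⁻ s in Set.Icc x (0 : ℝ), (n (Set.Iic s))⁻¹ ∂μ

/-- The set `{y ≥ 0 : D_μ(y) > v}`; its infimum is the right-continuous inverse
`D_μ⁻¹(v)`, with `D_μ⁻¹(v) = ∞` when the set is empty. -/
def DinvSet (μ n : MeasureTheory.Measure ℝ) (v : ℝ≥0∞) : Set ℝ :=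
  {y : ℝ | 0 ≤ y ∧ v < Dmu μ n y}

/-- The set `{x ≤ 0 : G_μ(x) > v}`; its supremum is the right-continuous inverse
`G_μ⁻¹(v)`, with `G_μ⁻¹(v) = −∞` when the set is empty. -/
def GinvSet (μ n : MeasureTheory.Measure ℝ) (v : ℝ≥0∞) : Set ℝ :=
  {x : ℝ | x ≤ 0 ∧ v < Gmu μ n x}

/-- `μ̄(D_μ⁻¹(v))`, with the convention `μ̄(∞) = 0`. -/
noncomputable def mubarDinv (μ n : MeasureTheory.Measure ℝ) (v : ℝ≥0∞) : ℝ :=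
  if (DinvSet μ n v).Nonempty then (μ (Set.Ici (sInf (DinvSet μ n v)))).toReal else 0

/-- `μ̄(G_μ⁻¹(v))`, with the convention `μ̄(−∞) = 1`. -/
noncomputable def mubarGinv (μ n : MeasureTheory.Measure ℝ) (v : ℝ≥0∞) : ℝ :=
  if (GinvSet μ n v).Nonempty then (μ (Set.Ici (sSup (GinvSet μ n v)))).toReal else 1

/-- `n([D_μ⁻¹(v),∞))`, with the convention that it is `0` when `D_μ⁻¹(v) = ∞`. -/
noncomputable def nDinv (μ n : MeasureTheory.Measure ℝ) (v : ℝ≥0∞) : ℝ≥0∞ :=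
  if (DinvSet μ n v).Nonempty then n (Set.Ici (sInf (DinvSet μ n v))) else 0

/-- `n((−∞,G_μ⁻¹(v)])`, with the convention that it is `0` when `G_μ⁻¹(v) = −∞`. -/
noncomputable def nGinv (μ n : MeasureTheory.Measure ℝ) (v : ℝ≥0∞) : ℝ≥0∞ :=
  if (GinvSet μ n v).Nonempty then n (Set.Iic (sSup (GinvSet μ n v))) else 0

/-- The integrand `[n([s,∞)) · (1 + μ̄(s) − μ̄(G_μ⁻¹(D_μ(s))))]⁻¹` of `ψ₊`. -/
noncomputable def psiPlusIntegrand (μ n : MeasureTheory.Measure ℝ) (s : ℝ) : ℝ≥0∞ :=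
  (n (Set.Ici s) *
    ENNReal.ofReal (1 + (μ (Set.Ici s)).toReal - mubarGinv μ n (Dmu μ n s)))⁻¹

/-- `ψ₊(y) = ∫_{[0,y]} [n([s,∞)) · (1 + μ̄(s) − μ̄(G_μ⁻¹(D_μ(s))))]⁻¹ dμ(s)`. -/
noncomputable def psiPlus (μ n : MeasureTheory.Measure ℝ) (y : ℝ) : ℝ≥0∞ :=
  ∫⁻ s in Set.Icc (0 : ℝ) y, psiPlusIntegrand μ n s ∂μ

/-- The integrand `[n((−∞,s]) · (1 + μ̄(D_μ⁻¹(G_μ(s))) − μ̄(s))]⁻¹` of `ψ₋`. -/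
noncomputable def psiMinusIntegrand (μ n : MeasureTheory.Measure ℝ) (s : ℝ) : ℝ≥0∞ :=
  (n (Set.Iic s) *
    ENNReal.ofReal (1 + mubarDinv μ n (Gmu μ n s) - (μ (Set.Ici s)).toReal))⁻¹

/-- `ψ₋(z) = ∫_{[−z,0]} [n((−∞,s]) · (1 + μ̄(D_μ⁻¹(G_μ(s))) − μ̄(s))]⁻¹ dμ(s)`. -/
noncomputable def psiMinus (μ n : MeasureTheory.Measure ℝ) (z : ℝ) : ℝ≥0∞ :=
  ∫⁻ s in Set.Icc (-z) (0 : ℝ), psiMinusIntegrand μ n s ∂μ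

/-- The set `{y ≥ 0 : ψ₊(y) ≥ l}` whose infimum is the left-continuous inverse `φ₊(l)`. -/
def phiPlusSet (μ n : MeasureTheory.Measure ℝ) (l : ℝ) : Set ℝ :=
  {y : ℝ | 0 ≤ y ∧ ENNReal.ofReal l ≤ psiPlus μ n y}

/-- The set `{z ≥ 0 : ψ₋(z) ≥ l}` whose infimum is the left-continuous inverse `φ₋(l)`. -/
def phiMinusSet (μ n : MeasureTheory.Measure ℝ) (l : ℝ) : Set ℝ :=
  {z : ℝ | 0 ≤ z ∧ ENNReal.ofReal l ≤ psiMinus μ n z}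

/-- `φ₊(l) = inf{y ≥ 0 : ψ₊(y) ≥ l}`. -/
noncomputable def phiPlus (μ n : MeasureTheory.Measure ℝ) (l : ℝ) : ℝ :=
  sInf (phiPlusSet μ n l)

/-- `φ₋(l) = inf{z ≥ 0 : ψ₋(z) ≥ l}`. -/
noncomputable def phiMinus (μ n : MeasureTheory.Measure ℝ) (l : ℝ) : ℝ :=
  sInf (phiMinusSet μ n l)

/-- `n([φ₊(l),∞))`, with the convention that it is `0` when `φ₊(l) = inf ∅ = ∞`. -/
noncomputable def nPhiPlus (μ n : MeasureTheory.Measure ℝ) (l : ℝ) : ℝ≥0∞ :=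
  if (phiPlusSet μ n l).Nonempty then n (Set.Ici (phiPlus μ n l)) else 0

/-- `n((−∞,−φ₋(l)])`, with the convention that it is `0` when `φ₋(l) = inf ∅ = ∞`. -/
noncomputable def nPhiMinus (μ n : MeasureTheory.Measure ℝ) (l : ℝ) : ℝ≥0∞ :=
  if (phiMinusSet μ n l).Nonempty then n (Set.Iic (-(phiMinus μ n l))) else 0

/-- `∫₀^L [n((−∞,−φ₋(s)]) + n([φ₊(s),∞))] ds` for an upper limit `L ∈ [0,∞]`. -/
noncomputable def cutInt (μ n : MeasureTheory.Measure ℝ) (L : ℝ≥0∞) : ℝ≥0∞ :=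
  ∫⁻ s in {s : ℝ | 0 < s ∧ ENNReal.ofReal s < L},
    (nPhiMinus μ n s + nPhiPlus μ n s)

/-- `exp(−a)` for `a ∈ [0,∞]`, with `exp(−∞) = 0`. -/
noncomputable def expNegE (a : ℝ≥0∞) : ℝ :=
  if a = ⊤ then 0 else Real.exp (-a.toReal)

/-- `ρ(l) = exp(−∫₀^l [n((−∞,−φ₋(s)]) + n([φ₊(s),∞))] ds)`. -/
noncomputable def rho (μ n : MeasureTheory.Measure ℝ) (l : ℝ) : ℝ≥0∞ :=
  ENNReal.ofReal (expNegE (cutInt μ n (ENNReal.ofReal l)))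

section infra

/-- Existence of a point whose right tail has exactly measure `r` (IVT for tails). -/
lemma aux_exists_tail_eq (ν : Measure ℝ) [IsFiniteMeasure ν] (hat : ∀ x : ℝ, ν {x} = 0)
    {r : ℝ≥0∞} (h0 : r ≠ 0) (hlt : r < ν Set.univ) :
    ∃ u : ℝ, ν (Set.Ioi u) = r := by
  set S : Set ℝ := {s : ℝ | ν (Set.Ioi s) ≤ r} with hSdef
  have hanti : ∀ {s t : ℝ}, s ≤ t → ν (Set.Ioi t) ≤ ν (Set.Ioi s) :=
    fun h => measure_mono (Set.Ioi_subset_Ioi h)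
  have htend0 : Tendsto (fun m : ℕ => ν (Set.Ioi ((m : ℝ)))) atTop (𝓝 0) := by
    have h1 : (⋂ m : ℕ, Set.Ioi ((m : ℝ))) = ∅ := by
      ext x
      simp only [Set.mem_iInter, Set.mem_Ioi, Set.mem_empty_iff_false, iff_false, not_forall,
        not_lt]
      obtain ⟨m, hm⟩ := exists_nat_gt x
      exact ⟨m, hm.le⟩
    have h2 := MeasureTheory.tendsto_measure_iInter_atTop (μ := ν)
      (s := fun m : ℕ => Set.Ioi ((m : ℝ)))
      (fun m => measurableSet_Ioi.nullMeasurableSet)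
      (fun a b hab => Set.Ioi_subset_Ioi (by exact_mod_cast hab))
      ⟨0, measure_ne_top _ _⟩
    rw [h1, measure_empty] at h2
    exact h2
  have hSne : S.Nonempty := by
    obtain ⟨m, hm⟩ := (htend0.eventually_lt_const (lt_of_le_of_ne zero_le (Ne.symm h0))).exists
    exact ⟨m, hm.le⟩
  have htendU : Tendsto (fun m : ℕ => ν (Set.Ioi (-(m : ℝ)))) atTop (𝓝 (ν Set.univ)) := by
    have h1 : (⋃ m : ℕ, Set.Ioi (-(m : ℝ))) = Set.univ := by
      ext x
      simp only [Set.mem_iUnion, Set.mem_Ioi, Set.mem_univ, iff_true]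
      obtain ⟨m, hm⟩ := exists_nat_gt (-x)
      exact ⟨m, by linarith⟩
    have h2 := tendsto_measure_iUnion_atTop (μ := ν) (s := fun m : ℕ => Set.Ioi (-(m : ℝ)))
      (fun a b hab => Set.Ioi_subset_Ioi (neg_le_neg (by exact_mod_cast hab)))
    rwa [h1] at h2
  obtain ⟨m₁, hm₁⟩ := (htendU.eventually_const_lt hlt).exists
  have hbdd : BddBelow S := by
    refine ⟨-(m₁ : ℝ), fun s hs => ?_⟩
    by_contra hc
    push_neg at hc
    exact absurd (le_trans (hanti hc.le) hs) (not_le.2 hm₁)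
  refine ⟨sInf S, le_antisymm ?_ ?_⟩
  · have hsub : Set.Ioi (sInf S) = ⋃ m : ℕ, Set.Ioi (sInf S + (1 : ℝ) / (m + 1)) := by
      ext x
      simp only [Set.mem_iUnion, Set.mem_Ioi]
      constructor
      · intro hx
        obtain ⟨m, hm⟩ := exists_nat_one_div_lt (sub_pos.2 hx)
        exact ⟨m, by push_cast at hm ⊢; linarith⟩
      · rintro ⟨m, hm⟩
        have hp : (0 : ℝ) < 1 / (m + 1) := by positivity
        linarith
    rw [hsub, Directed.measure_iUnion ((Monotone.directed_le (fun a b hab => Set.Ioi_subset_Ioi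
      (by have : (1:ℝ)/(b+1) ≤ 1/(a+1) := by
            apply one_div_le_one_div_of_le (by positivity) (by exact_mod_cast add_le_add_left (Nat.cast_le.2 hab) 1)
          linarith))))]
    refine iSup_le fun m => ?_
    have hp : (0 : ℝ) < 1 / (m + 1) := by positivity
    obtain ⟨t, htS, htlt⟩ := exists_lt_of_csInf_lt hSne (by linarith : sInf S < sInf S + 1 / (m + 1))
    exact le_trans (hanti htlt.le) htS
  · have hIci : ν (Set.Ici (sInf S)) = ν (Set.Ioi (sInf S)) := by
      refine le_antisymm ?_ (measure_mono Set.Ioi_subset_Ici_self)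
      have : Set.Ici (sInf S) ⊆ {sInf S} ∪ Set.Ioi (sInf S) := by
        intro x hx
        rcases eq_or_lt_of_le (Set.mem_Ici.1 hx : sInf S ≤ x) with h | h
        · exact Or.inl (by simp [h.symm])
        · exact Or.inr h
      calc ν (Set.Ici (sInf S)) ≤ ν ({sInf S} ∪ Set.Ioi (sInf S)) := measure_mono this
        _ ≤ ν {sInf S} + ν (Set.Ioi (sInf S)) := measure_union_le _ _
        _ = ν (Set.Ioi (sInf S)) := by rw [hat, zero_add]
    rw [← hIci]
    have hinter : Set.Ici (sInf S) = ⋂ m : ℕ, Set.Ioi (sInf S - (1 : ℝ) / (m + 1)) := by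
      ext x
      simp only [Set.mem_iInter, Set.mem_Ioi, Set.mem_Ici]
      constructor
      · intro hx m
        have hp : (0 : ℝ) < 1 / (m + 1) := by positivity
        linarith
      · intro hx
        by_contra hc
        push_neg at hc
        obtain ⟨m, hm⟩ := exists_nat_one_div_lt (sub_pos.2 hc)
        have := hx m
        push_cast at hm
        linarith
    have h2 := MeasureTheory.tendsto_measure_iInter_atTop (μ := ν)
      (s := fun m : ℕ => Set.Ioi (sInf S - (1 : ℝ) / (m + 1)))
      (fun m => measurableSet_Ioi.nullMeasurableSet)
      (fun a b hab => Set.Ioi_subset_Ioi (by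
        have : (1:ℝ)/(b+1) ≤ 1/(a+1) := by
          apply one_div_le_one_div_of_le (by positivity) (by exact_mod_cast add_le_add_left (Nat.cast_le.2 hab) 1)
        linarith))
      ⟨0, measure_ne_top _ _⟩
    rw [← hinter] at h2
    refine ge_of_tendsto h2 (Eventually.of_forall fun m => ?_)
    have hp : (0 : ℝ) < 1 / (m + 1) := by positivity
    have hnotS : sInf S - 1 / (m + 1) ∉ S := by
      intro hmem
      have := csInf_le hbdd hmem
      linarith
    exact (not_le.1 hnotS).le

/-- Mirror: existence of a point whose left tail has exactly measure `r`. -/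
lemma aux_exists_head_eq (ν : Measure ℝ) [IsFiniteMeasure ν] (hat : ∀ x : ℝ, ν {x} = 0)
    {r : ℝ≥0∞} (h0 : r ≠ 0) (hlt : r < ν Set.univ) :
    ∃ u : ℝ, ν (Set.Iio u) = r := by
  set S : Set ℝ := {s : ℝ | ν (Set.Iio s) ≤ r} with hSdef
  have hmono : ∀ {s t : ℝ}, s ≤ t → ν (Set.Iio s) ≤ ν (Set.Iio t) :=
    fun h => measure_mono (Set.Iio_subset_Iio h)
  have htend0 : Tendsto (fun m : ℕ => ν (Set.Iio (-(m : ℝ)))) atTop (𝓝 0) := by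
    have h1 : (⋂ m : ℕ, Set.Iio (-(m : ℝ))) = ∅ := by
      ext x
      simp only [Set.mem_iInter, Set.mem_Iio, Set.mem_empty_iff_false, iff_false, not_forall,
        not_lt]
      obtain ⟨m, hm⟩ := exists_nat_gt (-x)
      exact ⟨m, by linarith⟩
    have h2 := MeasureTheory.tendsto_measure_iInter_atTop (μ := ν)
      (s := fun m : ℕ => Set.Iio (-(m : ℝ)))
      (fun m => measurableSet_Iio.nullMeasurableSet)
      (fun a b hab => Set.Iio_subset_Iio (neg_le_neg (by exact_mod_cast hab)))
      ⟨0, measure_ne_top _ _⟩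
    rw [h1, measure_empty] at h2
    exact h2
  have hSne : S.Nonempty := by
    obtain ⟨m, hm⟩ := (htend0.eventually_lt_const (lt_of_le_of_ne zero_le (Ne.symm h0))).exists
    exact ⟨-(m : ℝ), hm.le⟩
  have htendU : Tendsto (fun m : ℕ => ν (Set.Iio ((m : ℝ)))) atTop (𝓝 (ν Set.univ)) := by
    have h1 : (⋃ m : ℕ, Set.Iio ((m : ℝ))) = Set.univ := by
      ext x
      simp only [Set.mem_iUnion, Set.mem_Iio, Set.mem_univ, iff_true]
      obtain ⟨m, hm⟩ := exists_nat_gt x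
      exact ⟨m, hm⟩
    have h2 := tendsto_measure_iUnion_atTop (μ := ν) (s := fun m : ℕ => Set.Iio ((m : ℝ)))
      (fun a b hab => Set.Iio_subset_Iio (by exact_mod_cast hab))
    rwa [h1] at h2
  obtain ⟨m₁, hm₁⟩ := (htendU.eventually_const_lt hlt).exists
  have hbdd : BddAbove S := by
    refine ⟨(m₁ : ℝ), fun s hs => ?_⟩
    by_contra hc
    push_neg at hc
    exact absurd (le_trans (hmono hc.le) hs) (not_le.2 hm₁)
  refine ⟨sSup S, le_antisymm ?_ ?_⟩
  · have hsub : Set.Iio (sSup S) = ⋃ m : ℕ, Set.Iio (sSup S - (1 : ℝ) / (m + 1)) := by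
      ext x
      simp only [Set.mem_iUnion, Set.mem_Iio]
      constructor
      · intro hx
        obtain ⟨m, hm⟩ := exists_nat_one_div_lt (sub_pos.2 hx)
        exact ⟨m, by linarith⟩
      · rintro ⟨m, hm⟩
        have hp : (0 : ℝ) < 1 / (m + 1) := by positivity
        linarith
    rw [hsub, Directed.measure_iUnion ((Monotone.directed_le (fun a b hab => Set.Iio_subset_Iio
      (by have : (1:ℝ)/(b+1) ≤ 1/(a+1) := by
            apply one_div_le_one_div_of_le (by positivity) (by exact_mod_cast add_le_add_left (Nat.cast_le.2 hab) 1)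
          linarith))))]
    refine iSup_le fun m => ?_
    have hp : (0 : ℝ) < 1 / (m + 1) := by positivity
    obtain ⟨t, htS, htlt⟩ := exists_lt_of_lt_csSup hSne (by linarith : sSup S - 1 / (m + 1) < sSup S)
    exact le_trans (hmono htlt.le) htS
  · have hIci : ν (Set.Iic (sSup S)) = ν (Set.Iio (sSup S)) := by
      refine le_antisymm ?_ (measure_mono Set.Iio_subset_Iic_self)
      have h3 : Set.Iic (sSup S) ⊆ {sSup S} ∪ Set.Iio (sSup S) := by
        intro x hx
        rcases eq_or_lt_of_le (show x ≤ sSup S from hx) with h | h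
        · exact Or.inl (by simp [h])
        · exact Or.inr h
      calc ν (Set.Iic (sSup S)) ≤ ν ({sSup S} ∪ Set.Iio (sSup S)) := measure_mono h3
        _ ≤ ν {sSup S} + ν (Set.Iio (sSup S)) := measure_union_le _ _
        _ = ν (Set.Iio (sSup S)) := by rw [hat, zero_add]
    rw [← hIci]
    have hinter : Set.Iic (sSup S) = ⋂ m : ℕ, Set.Iio (sSup S + (1 : ℝ) / (m + 1)) := by
      ext x
      simp only [Set.mem_iInter, Set.mem_Iio, Set.mem_Iic]
      constructor
      · intro hx m
        have hp : (0 : ℝ) < 1 / (m + 1) := by positivity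
        linarith
      · intro hx
        by_contra hc
        push_neg at hc
        obtain ⟨m, hm⟩ := exists_nat_one_div_lt (sub_pos.2 hc)
        have := hx m
        linarith
    have h2 := MeasureTheory.tendsto_measure_iInter_atTop (μ := ν)
      (s := fun m : ℕ => Set.Iio (sSup S + (1 : ℝ) / (m + 1)))
      (fun m => measurableSet_Iio.nullMeasurableSet)
      (fun a b hab => Set.Iio_subset_Iio (by
        have : (1:ℝ)/(b+1) ≤ 1/(a+1) := by
          apply one_div_le_one_div_of_le (by positivity) (by exact_mod_cast add_le_add_left (Nat.cast_le.2 hab) 1)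
        linarith))
      ⟨0, measure_ne_top _ _⟩
    rw [← hinter] at h2
    refine ge_of_tendsto h2 (Eventually.of_forall fun m => ?_)
    have hp : (0 : ℝ) < 1 / (m + 1) := by positivity
    have hnotS : sSup S + 1 / (m + 1) ∉ S := by
      intro hmem
      have := le_csSup hbdd hmem
      linarith
    exact (not_le.1 hnotS).le

/-- An open set disjoint from the support is null. -/
lemma aux_null_of_forall_not_support (μ : Measure ℝ) {U : Set ℝ} (hU : IsOpen U)
    (h : ∀ x ∈ U, x ∉ measSupport μ) : μ U = 0 := by
  have hch : ∀ x : U, ∃ V : Set ℝ, IsOpen V ∧ (x : ℝ) ∈ V ∧ μ V = 0 := by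
    rintro ⟨x, hx⟩
    have hx2 := h x hx
    simp only [measSupport, Set.mem_setOf_eq, not_forall, not_lt] at hx2
    obtain ⟨V, hV1, hV2, hV3⟩ := hx2
    exact ⟨V, hV1, hV2, le_antisymm hV3 zero_le⟩
  choose V hVo hVx hV0 using hch
  obtain ⟨T, hTc, hTU⟩ := TopologicalSpace.isOpen_iUnion_countable V hVo
  have hUsub : U ⊆ ⋃ i ∈ T, V i := by
    rw [hTU]
    intro x hx
    exact Set.mem_iUnion.2 ⟨⟨x, hx⟩, hVx _⟩
  have hnull : μ (⋃ i ∈ T, V i) = 0 := (measure_biUnion_null_iff hTc).2 fun i _ => hV0 i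
  exact le_antisymm (le_trans (measure_mono hUsub) hnull.le) zero_le


end infra

/-- The measure `dν₊ = n([s,∞))⁻¹ 1_{[0,∞)}(s) dμ(s)`, so that `D_μ(y) = ν₊((-∞,y])`. -/
noncomputable def nuP (μ n : Measure ℝ) : Measure ℝ :=
  (μ.restrict (Set.Ici 0)).withDensity (fun s => (n (Set.Ici s))⁻¹)

/-- The measure `dν₋ = n((−∞,s])⁻¹ 1_{(-∞,0]}(s) dμ(s)`, so that `G_μ(x) = ν₋([x,∞))`. -/
noncomputable def nuM (μ n : Measure ℝ) : Measure ℝ :=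
  (μ.restrict (Set.Iic 0)).withDensity (fun s => (n (Set.Iic s))⁻¹)

lemma wP_mono (n : Measure ℝ) : Monotone (fun s : ℝ => (n (Set.Ici s))⁻¹) :=
  fun a b hab => ENNReal.inv_le_inv.2 (measure_mono (Set.Ici_subset_Ici.2 hab))

lemma wM_anti (n : Measure ℝ) : Antitone (fun s : ℝ => (n (Set.Iic s))⁻¹) :=
  fun a b hab => ENNReal.inv_le_inv.2 (measure_mono (Set.Iic_subset_Iic.2 hab))

lemma wP_measurable (n : Measure ℝ) : Measurable (fun s : ℝ => (n (Set.Ici s))⁻¹) :=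
  (wP_mono n).measurable

lemma wM_measurable (n : Measure ℝ) : Measurable (fun s : ℝ => (n (Set.Iic s))⁻¹) :=
  (wM_anti n).measurable

lemma nuP_apply (μ n : Measure ℝ) {A : Set ℝ} (hA : MeasurableSet A) :
    nuP μ n A = ∫⁻ s in A ∩ Set.Ici 0, (n (Set.Ici s))⁻¹ ∂μ := by
  rw [nuP, withDensity_apply _ hA, Measure.restrict_restrict hA]

lemma nuM_apply (μ n : Measure ℝ) {A : Set ℝ} (hA : MeasurableSet A) :
    nuM μ n A = ∫⁻ s in A ∩ Set.Iic 0, (n (Set.Iic s))⁻¹ ∂μ := by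
  rw [nuM, withDensity_apply _ hA, Measure.restrict_restrict hA]

lemma Dmu_eq (μ n : Measure ℝ) (y : ℝ) : Dmu μ n y = nuP μ n (Set.Iic y) := by
  rw [nuP_apply μ n measurableSet_Iic, Dmu]
  rw [Set.inter_comm, Set.Ici_inter_Iic]

lemma Gmu_eq (μ n : Measure ℝ) (x : ℝ) : Gmu μ n x = nuM μ n (Set.Ici x) := by
  rw [nuM_apply μ n measurableSet_Ici, Gmu, Set.Ici_inter_Iic]

lemma Dmu_mono (μ n : Measure ℝ) : Monotone (Dmu μ n) :=
  fun a b hab => lintegral_mono_set (Set.Icc_subset_Icc_right hab)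

lemma Gmu_anti (μ n : Measure ℝ) : Antitone (Gmu μ n) :=
  fun a b hab => lintegral_mono_set (Set.Icc_subset_Icc_left hab)

lemma nuP_univ (μ n : Measure ℝ) : nuP μ n Set.univ = ⨆ y : ℝ, Dmu μ n y := by
  refine le_antisymm ?_ (iSup_le fun y => by
    rw [Dmu_eq]; exact measure_mono (Set.subset_univ _))
  have h1 : (⋃ m : ℕ, Set.Iic ((m : ℝ))) = Set.univ := by
    ext x
    simp only [Set.mem_iUnion, Set.mem_Iic, Set.mem_univ, iff_true]
    obtain ⟨m, hm⟩ := exists_nat_gt x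
    exact ⟨m, hm.le⟩
  rw [← h1, Directed.measure_iUnion (Monotone.directed_le
    (fun a b hab => Set.Iic_subset_Iic.2 (by exact_mod_cast hab)))]
  exact iSup_le fun m => by rw [← Dmu_eq]; exact le_iSup (Dmu μ n) ((m : ℝ))

lemma nuM_univ (μ n : Measure ℝ) : nuM μ n Set.univ = ⨆ x : ℝ, Gmu μ n x := by
  refine le_antisymm ?_ (iSup_le fun x => by
    rw [Gmu_eq]; exact measure_mono (Set.subset_univ _))
  have h1 : (⋃ m : ℕ, Set.Ici (-(m : ℝ))) = Set.univ := by
    ext x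
    simp only [Set.mem_iUnion, Set.mem_Ici, Set.mem_univ, iff_true]
    obtain ⟨m, hm⟩ := exists_nat_gt (-x)
    exact ⟨m, by linarith⟩
  rw [← h1, Directed.measure_iUnion (Monotone.directed_le
    (fun a b hab => Set.Ici_subset_Ici.2 (neg_le_neg (by exact_mod_cast hab))))]
  exact iSup_le fun m => by rw [← Gmu_eq]; exact le_iSup (Gmu μ n) (-(m : ℝ))

lemma nuP_singleton (μ n : Measure ℝ) (hatomless : ∀ x : ℝ, μ {x} = 0) (x : ℝ) :
    nuP μ n {x} = 0 := by
  rw [nuP_apply μ n (measurableSet_singleton x)]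
  exact setLIntegral_measure_zero _ _
    (le_antisymm (le_trans (measure_mono Set.inter_subset_left) (hatomless x).le) zero_le)

lemma nuM_singleton (μ n : Measure ℝ) (hatomless : ∀ x : ℝ, μ {x} = 0) (x : ℝ) :
    nuM μ n {x} = 0 := by
  rw [nuM_apply μ n (measurableSet_singleton x)]
  exact setLIntegral_measure_zero _ _
    (le_antisymm (le_trans (measure_mono Set.inter_subset_left) (hatomless x).le) zero_le)

lemma meas_Iic_add_Ioi (ν : Measure ℝ) (s : ℝ) : ν (Set.Iic s) + ν (Set.Ioi s) = ν Set.univ := by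
  rw [← measure_union (Set.Iic_disjoint_Ioi le_rfl) measurableSet_Ioi, Set.Iic_union_Ioi]

lemma meas_Iio_add_Ici (ν : Measure ℝ) (s : ℝ) : ν (Set.Iio s) + ν (Set.Ici s) = ν Set.univ := by
  rw [← measure_union (Set.Iio_disjoint_Ici le_rfl) measurableSet_Ici, Set.Iio_union_Ici]

lemma meas_Ici_eq_Ioi {ν : Measure ℝ} {s : ℝ} (h : ν {s} = 0) :
    ν (Set.Ici s) = ν (Set.Ioi s) := by
  refine le_antisymm ?_ (measure_mono Set.Ioi_subset_Ici_self)
  have h3 : Set.Ici s ⊆ {s} ∪ Set.Ioi s := by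
    intro x hx
    rcases eq_or_lt_of_le (show s ≤ x from hx) with h4 | h4
    · exact Or.inl (by simp [h4.symm])
    · exact Or.inr h4
  calc ν (Set.Ici s) ≤ ν ({s} ∪ Set.Ioi s) := measure_mono h3
    _ ≤ ν {s} + ν (Set.Ioi s) := measure_union_le _ _
    _ = ν (Set.Ioi s) := by rw [h, zero_add]

lemma meas_Iic_eq_Iio {ν : Measure ℝ} {s : ℝ} (h : ν {s} = 0) :
    ν (Set.Iic s) = ν (Set.Iio s) := by
  refine le_antisymm ?_ (measure_mono Set.Iio_subset_Iic_self)
  have h3 : Set.Iic s ⊆ {s} ∪ Set.Iio s := by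
    intro x hx
    rcases eq_or_lt_of_le (show x ≤ s from hx) with h4 | h4
    · exact Or.inl (by simp [h4])
    · exact Or.inr h4
  calc ν (Set.Iic s) ≤ ν ({s} ∪ Set.Iio s) := measure_mono h3
    _ ≤ ν {s} + ν (Set.Iio s) := measure_union_le _ _
    _ = ν (Set.Iio s) := by rw [h, zero_add]
section core

variable {μ n : Measure ℝ}

lemma plusDiverge (μ n : Measure ℝ) [IsProbabilityMeasure μ]
    (hatomless : ∀ x : ℝ, μ {x} = 0)
    (hneg : 0 < μ (Set.Iio (0 : ℝ))) (hpos : 0 < μ (Set.Ioi (0 : ℝ)))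
    (hnfin : ∀ s : ℝ, 0 < s → n (Set.Ici s) < ⊤ ∧ n (Set.Iic (-s)) < ⊤)
    (hcompat : (⨆ y : ℝ, Dmu μ n y) = (⨆ x : ℝ, Gmu μ n x)) :
    ∫⁻ s in Set.Ioi (0 : ℝ), psiPlusIntegrand μ n s ∂μ = ⊤ := by
  have hvv : nuP μ n Set.univ = nuM μ n Set.univ := by
    rw [nuP_univ, nuM_univ, hcompat]
  -- choose s₀ > 0 with μ (Ioi s₀) > 0
  obtain ⟨s₀, hs₀pos, hs₀⟩ : ∃ s₀ : ℝ, 0 < s₀ ∧ 0 < μ (Set.Ioi s₀) := by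
    by_contra hc
    push_neg at hc
    have h1 : Set.Ioi (0 : ℝ) ⊆ ⋃ m : ℕ, Set.Ioi ((1 : ℝ) / (m + 1)) := by
      intro x hx
      obtain ⟨m, hm⟩ := exists_nat_one_div_lt (Set.mem_Ioi.1 hx)
      exact Set.mem_iUnion.2 ⟨m, hm⟩
    have h2 : μ (Set.Ioi (0 : ℝ)) ≤ ∑' m : ℕ, μ (Set.Ioi ((1 : ℝ) / (m + 1))) :=
      (measure_mono h1).trans (measure_iUnion_le _)
    have h3 : ∀ m : ℕ, μ (Set.Ioi ((1 : ℝ) / (m + 1))) = 0 := fun m =>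
      le_antisymm (hc _ (by positivity)) zero_le
    rw [tsum_congr h3, tsum_zero] at h2
    exact absurd h2 (not_le.2 hpos)
  -- choose t₀ < 0 with μ (Iio t₀) > 0
  obtain ⟨t₀, ht₀neg, ht₀⟩ : ∃ t₀ : ℝ, t₀ < 0 ∧ 0 < μ (Set.Iio t₀) := by
    by_contra hc
    push_neg at hc
    have h1 : Set.Iio (0 : ℝ) ⊆ ⋃ m : ℕ, Set.Iio (-((1 : ℝ) / (m + 1))) := by
      intro x hx
      obtain ⟨m, hm⟩ := exists_nat_one_div_lt (show (0:ℝ) < -x by simpa using hx)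
      exact Set.mem_iUnion.2 ⟨m, by simp only [Set.mem_Iio]; linarith⟩
    have h2 : μ (Set.Iio (0 : ℝ)) ≤ ∑' m : ℕ, μ (Set.Iio (-((1 : ℝ) / (m + 1)))) :=
      (measure_mono h1).trans (measure_iUnion_le _)
    have h3 : ∀ m : ℕ, μ (Set.Iio (-((1 : ℝ) / (m + 1)))) = 0 := fun m =>
      le_antisymm (hc _ (neg_lt_zero.2 (by positivity))) zero_le
    rw [tsum_congr h3, tsum_zero] at h2
    exact absurd h2 (not_le.2 hneg)
  have hCfin : n (Set.Ici s₀) < ⊤ := (hnfin s₀ hs₀pos).1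
  have hC'fin : n (Set.Iic t₀) < ⊤ := by
    have h := (hnfin (-t₀) (by linarith)).2
    rwa [neg_neg] at h
  rcases eq_or_ne (nuP μ n Set.univ) ⊤ with hcase | hcase
  · -- Case A : total ν-mass infinite
    have hbd : ∀ s : ℝ, (n (Set.Ici s))⁻¹ * (ENNReal.ofReal 2)⁻¹ ≤ psiPlusIntegrand μ n s := by
      intro s
      rw [psiPlusIntegrand, ← ENNReal.mul_inv (Or.inr (by simp)) (Or.inr (by simp))]
      refine ENNReal.inv_le_inv.2 (mul_le_mul_right (ENNReal.ofReal_le_ofReal ?_) _)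
      have h1 : (μ (Set.Ici s)).toReal ≤ 1 := by
        simpa using ENNReal.toReal_mono ENNReal.one_ne_top (prob_le_one (μ := μ) (s := Set.Ici s))
      have h2 : 0 ≤ mubarGinv μ n (Dmu μ n s) := by
        rw [mubarGinv]; split_ifs
        · exact ENNReal.toReal_nonneg
        · exact zero_le_one
      linarith
    have hIoi : ∫⁻ s in Set.Ioi (0 : ℝ), (n (Set.Ici s))⁻¹ ∂μ = nuP μ n (Set.Ioi 0) := by
      rw [nuP_apply μ n measurableSet_Ioi,
        Set.inter_eq_self_of_subset_left Set.Ioi_subset_Ici_self]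
    have hν0 : nuP μ n (Set.Iic 0) = 0 := by
      rw [nuP_apply μ n measurableSet_Iic]
      have h4 : Set.Iic (0 : ℝ) ∩ Set.Ici 0 = {0} := by
        ext x
        simp only [Set.mem_inter_iff, Set.mem_Iic, Set.mem_Ici, Set.mem_singleton_iff]
        constructor
        · rintro ⟨h5, h6⟩; linarith
        · rintro rfl; exact ⟨le_rfl, le_rfl⟩
      rw [h4]
      exact setLIntegral_measure_zero _ _ (hatomless 0)
    have hνIoi : nuP μ n (Set.Ioi 0) = ⊤ := by
      have h5 := meas_Iic_add_Ioi (nuP μ n) 0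
      rw [hν0, zero_add, hcase] at h5
      exact h5
    have hge : (⊤ : ℝ≥0∞) ≤ ∫⁻ s in Set.Ioi (0 : ℝ), psiPlusIntegrand μ n s ∂μ := by
      calc (⊤ : ℝ≥0∞) = nuP μ n (Set.Ioi 0) * (ENNReal.ofReal 2)⁻¹ := by
            rw [hνIoi, ENNReal.top_mul (by simp)]
        _ = (∫⁻ s in Set.Ioi (0 : ℝ), (n (Set.Ici s))⁻¹ ∂μ) * (ENNReal.ofReal 2)⁻¹ := by
            rw [hIoi]
        _ = ∫⁻ s in Set.Ioi (0 : ℝ), (n (Set.Ici s))⁻¹ * (ENNReal.ofReal 2)⁻¹ ∂μ :=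
            (lintegral_mul_const _ (wP_measurable n)).symm
        _ ≤ _ := lintegral_mono fun s => hbd s
    exact top_le_iff.1 hge
  · -- Case B : total ν-mass finite
    have hfin' : nuM μ n Set.univ ≠ ⊤ := hvv ▸ hcase
    haveI : IsFiniteMeasure (nuP μ n) := ⟨lt_top_iff_ne_top.2 hcase⟩
    haveI : IsFiniteMeasure (nuM μ n) := ⟨lt_top_iff_ne_top.2 hfin'⟩
    -- C ≠ 0
    have hC0 : n (Set.Ici s₀) ≠ 0 := by
      intro h0
      have h5 : nuP μ n (Set.Ioi s₀) = ⊤ := by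
        rw [nuP_apply μ n measurableSet_Ioi]
        have h6 : ∀ u ∈ Set.Ioi s₀ ∩ Set.Ici 0, (⊤ : ℝ≥0∞) ≤ (n (Set.Ici u))⁻¹ := by
          intro u hu
          have h7 : n (Set.Ici u) = 0 :=
            le_antisymm (h0 ▸ measure_mono (Set.Ici_subset_Ici.2 (le_of_lt hu.1))) zero_le
          simp [h7]
        have h8 : Set.Ioi s₀ ∩ Set.Ici 0 = Set.Ioi s₀ :=
          Set.inter_eq_self_of_subset_left (fun x hx => le_of_lt (lt_trans hs₀pos hx))
        refine top_le_iff.1 ?_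
        calc (⊤ : ℝ≥0∞) = ⊤ * μ (Set.Ioi s₀ ∩ Set.Ici 0) := by
              rw [h8]; exact (ENNReal.top_mul hs₀.ne').symm
          _ = ∫⁻ _ in Set.Ioi s₀ ∩ Set.Ici 0, (⊤ : ℝ≥0∞) ∂μ := (setLIntegral_const _ _).symm
          _ ≤ _ := setLIntegral_mono' (measurableSet_Ioi.inter measurableSet_Ici) h6
      exact hcase (top_le_iff.1 ((h5 ▸ measure_mono (Set.subset_univ _) : (⊤:ℝ≥0∞) ≤ _)))
    -- C' ≠ 0
    have hC'0 : n (Set.Iic t₀) ≠ 0 := by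
      intro h0
      have h5 : nuM μ n (Set.Iio t₀) = ⊤ := by
        rw [nuM_apply μ n measurableSet_Iio]
        have h6 : ∀ u ∈ Set.Iio t₀ ∩ Set.Iic 0, (⊤ : ℝ≥0∞) ≤ (n (Set.Iic u))⁻¹ := by
          intro u hu
          have h7 : n (Set.Iic u) = 0 :=
            le_antisymm (h0 ▸ measure_mono (Set.Iic_subset_Iic.2 (le_of_lt hu.1))) zero_le
          simp [h7]
        have h8 : Set.Iio t₀ ∩ Set.Iic 0 = Set.Iio t₀ :=
          Set.inter_eq_self_of_subset_left (fun x hx => le_of_lt (lt_trans hx ht₀neg))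
        refine top_le_iff.1 ?_
        calc (⊤ : ℝ≥0∞) = ⊤ * μ (Set.Iio t₀ ∩ Set.Iic 0) := by
              rw [h8]; exact (ENNReal.top_mul ht₀.ne').symm
          _ = ∫⁻ _ in Set.Iio t₀ ∩ Set.Iic 0, (⊤ : ℝ≥0∞) ∂μ := (setLIntegral_const _ _).symm
          _ ≤ _ := setLIntegral_mono' (measurableSet_Iio.inter measurableSet_Iic) h6
      exact hfin' (top_le_iff.1 ((h5 ▸ measure_mono (Set.subset_univ _) : (⊤:ℝ≥0∞) ≤ _)))
    -- positive masses
    have hδP : 0 < nuP μ n (Set.Ioi s₀) := by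
      have h1 : (n (Set.Ici s₀))⁻¹ * μ (Set.Ioi s₀) ≤ nuP μ n (Set.Ioi s₀) := by
        have h8 : Set.Ioi s₀ ∩ Set.Ici 0 = Set.Ioi s₀ :=
          Set.inter_eq_self_of_subset_left (fun x hx => le_of_lt (lt_trans hs₀pos hx))
        rw [nuP_apply μ n measurableSet_Ioi, h8]
        calc (n (Set.Ici s₀))⁻¹ * μ (Set.Ioi s₀)
            = ∫⁻ _ in Set.Ioi s₀, (n (Set.Ici s₀))⁻¹ ∂μ := (setLIntegral_const _ _).symm
          _ ≤ _ := setLIntegral_mono' measurableSet_Ioi (fun u hu => wP_mono n (le_of_lt hu))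
      exact lt_of_lt_of_le (ENNReal.mul_pos (ENNReal.inv_ne_zero.2 hCfin.ne) hs₀.ne') h1
    have hδM : 0 < nuM μ n (Set.Iio t₀) := by
      have h1 : (n (Set.Iic t₀))⁻¹ * μ (Set.Iio t₀) ≤ nuM μ n (Set.Iio t₀) := by
        have h8 : Set.Iio t₀ ∩ Set.Iic 0 = Set.Iio t₀ :=
          Set.inter_eq_self_of_subset_left (fun x hx => le_of_lt (lt_trans hx ht₀neg))
        rw [nuM_apply μ n measurableSet_Iio, h8]
        calc (n (Set.Iic t₀))⁻¹ * μ (Set.Iio t₀)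
            = ∫⁻ _ in Set.Iio t₀, (n (Set.Iic t₀))⁻¹ ∂μ := (setLIntegral_const _ _).symm
          _ ≤ _ := setLIntegral_mono' measurableSet_Iio (fun u hu => wM_anti n (le_of_lt hu))
      exact lt_of_lt_of_le (ENNReal.mul_pos (ENNReal.inv_ne_zero.2 hC'fin.ne) ht₀.ne') h1
    have hδMfin : nuM μ n (Set.Iio t₀) ≠ ⊤ := measure_ne_top _ _
    have hδPfin : nuP μ n (Set.Ioi s₀) ≠ ⊤ := measure_ne_top _ _
    -- key pointwise bound
    set K : ℝ≥0∞ := n (Set.Ici s₀) + n (Set.Iic t₀) + (nuM μ n (Set.Iio t₀))⁻¹ + 1 with hKdef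
    have hK0 : K ≠ 0 := by
      have h1 : (1 : ℝ≥0∞) ≤ K := le_add_self
      intro h; rw [h] at h1; exact (not_le.2 zero_lt_one) h1
    have hKtop : K ≠ ⊤ := by
      rw [hKdef]
      exact ENNReal.add_ne_top.2 ⟨ENNReal.add_ne_top.2 ⟨ENNReal.add_ne_top.2
        ⟨hCfin.ne, hC'fin.ne⟩, ENNReal.inv_ne_top.2 hδM.ne'⟩, ENNReal.one_ne_top⟩
    have hkey : ∀ s : ℝ, s₀ < s →
        ENNReal.ofReal (1 + (μ (Set.Ici s)).toReal - mubarGinv μ n (Dmu μ n s))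
          ≤ K * nuP μ n (Set.Ioi s) := by
      intro s hs
      have hsplit : ENNReal.ofReal (1 + (μ (Set.Ici s)).toReal - mubarGinv μ n (Dmu μ n s))
          ≤ μ (Set.Ici s) + ENNReal.ofReal (1 - mubarGinv μ n (Dmu μ n s)) := by
        have h1 : 1 + (μ (Set.Ici s)).toReal - mubarGinv μ n (Dmu μ n s)
            = (μ (Set.Ici s)).toReal + (1 - mubarGinv μ n (Dmu μ n s)) := by ring
        rw [h1]
        refine le_trans ENNReal.ofReal_add_le (add_le_add_left ?_ _)
        rw [ENNReal.ofReal_toReal (measure_ne_top μ _)]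
      -- part (a)
      have hparta : μ (Set.Ici s) ≤ n (Set.Ici s₀) * nuP μ n (Set.Ioi s) := by
        have h8 : Set.Ioi s ∩ Set.Ici 0 = Set.Ioi s :=
          Set.inter_eq_self_of_subset_left
            (fun x hx => le_of_lt (lt_trans (lt_trans hs₀pos hs) hx))
        have h1 : (n (Set.Ici s₀))⁻¹ * μ (Set.Ioi s) ≤ nuP μ n (Set.Ioi s) := by
          rw [nuP_apply μ n measurableSet_Ioi, h8]
          calc (n (Set.Ici s₀))⁻¹ * μ (Set.Ioi s)
              = ∫⁻ _ in Set.Ioi s, (n (Set.Ici s₀))⁻¹ ∂μ := (setLIntegral_const _ _).symm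
            _ ≤ _ := setLIntegral_mono' measurableSet_Ioi
                (fun u hu => wP_mono n (le_of_lt (lt_trans hs hu)))
        rw [meas_Ici_eq_Ioi (hatomless s)]
        calc μ (Set.Ioi s) = n (Set.Ici s₀) * ((n (Set.Ici s₀))⁻¹ * μ (Set.Ioi s)) := by
              rw [← mul_assoc, ENNReal.mul_inv_cancel hC0 hCfin.ne, one_mul]
          _ ≤ n (Set.Ici s₀) * nuP μ n (Set.Ioi s) := mul_le_mul_right h1 _
      -- part (b)
      have hpartb : ENNReal.ofReal (1 - mubarGinv μ n (Dmu μ n s))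
          ≤ (n (Set.Iic t₀) + (nuM μ n (Set.Iio t₀))⁻¹) * nuP μ n (Set.Ioi s) := by
        by_cases hne : (GinvSet μ n (Dmu μ n s)).Nonempty
        · rw [mubarGinv, if_pos hne]
          set c := sSup (GinvSet μ n (Dmu μ n s)) with hcdef
          have hlt : ∀ x : ℝ, x < c → Dmu μ n s < Gmu μ n x := by
            intro x hx
            obtain ⟨x₀, hx₀S, hxx₀⟩ := exists_lt_of_lt_csSup hne hx
            exact lt_of_lt_of_le hx₀S.2 (Gmu_anti μ n hxx₀.le)
          have hphi : ∀ x : ℝ, x < c → nuM μ n (Set.Iio x) ≤ nuP μ n (Set.Ioi s) := by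
            intro x hx
            have hDle : nuP μ n (Set.Iic s) ≤ nuM μ n (Set.Ici x) := by
              rw [← Dmu_eq, ← Gmu_eq]; exact (hlt x hx).le
            have e3 : nuP μ n (Set.Iic s) + nuP μ n (Set.Ioi s)
                = nuM μ n (Set.Iio x) + nuM μ n (Set.Ici x) := by
              rw [meas_Iic_add_Ioi, meas_Iio_add_Ici, hvv]
            have e4 : nuP μ n (Set.Iic s) + nuM μ n (Set.Iio x)
                ≤ nuP μ n (Set.Iic s) + nuP μ n (Set.Ioi s) := by
              rw [e3, add_comm (nuM μ n (Set.Iio x))]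
              exact add_le_add_left hDle _
            exact (ENNReal.add_le_add_iff_left (measure_ne_top _ _)).1 e4
          have hphic : nuM μ n (Set.Iio c) ≤ nuP μ n (Set.Ioi s) := by
            have h1 : Set.Iio c = ⋃ m : ℕ, Set.Iio (c - (1 : ℝ) / (m + 1)) := by
              ext x
              simp only [Set.mem_iUnion, Set.mem_Iio]
              constructor
              · intro hx
                obtain ⟨m, hm⟩ := exists_nat_one_div_lt (sub_pos.2 hx)
                exact ⟨m, by linarith⟩
              · rintro ⟨m, hm⟩
                have hp : (0 : ℝ) < 1 / (m + 1) := by positivity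
                linarith
            rw [h1, Directed.measure_iUnion (Monotone.directed_le (fun a b hab =>
              Set.Iio_subset_Iio (by
                have h9 : (1:ℝ)/(b+1) ≤ 1/(a+1) := one_div_le_one_div_of_le (by positivity)
                  (by exact_mod_cast add_le_add_left (Nat.cast_le.2 hab) 1)
                linarith)))]
            refine iSup_le fun m => hphi _ ?_
            have hp : (0 : ℝ) < 1 / (m + 1) := by positivity
            linarith
          have hofReal : ENNReal.ofReal (1 - (μ (Set.Ici c)).toReal) = μ (Set.Iio c) := by
            have h5 : ((1 : ℝ≥0∞) - μ (Set.Ici c)).toReal = 1 - (μ (Set.Ici c)).toReal := by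
              rw [ENNReal.toReal_sub_of_le prob_le_one ENNReal.one_ne_top, ENNReal.toReal_one]
            rw [← h5, ENNReal.ofReal_toReal
              (lt_of_le_of_lt (tsub_le_self) ENNReal.one_lt_top).ne]
            rw [← prob_compl_eq_one_sub measurableSet_Ici, Set.compl_Ici]
          rw [hofReal]
          rcases le_or_gt c t₀ with hct | hct
          · -- c ≤ t₀
            have h8 : Set.Iio c ∩ Set.Iic 0 = Set.Iio c :=
              Set.inter_eq_self_of_subset_left
                (fun x hx => le_of_lt (lt_of_lt_of_le hx (hct.trans ht₀neg.le)))
            have h1 : (n (Set.Iic t₀))⁻¹ * μ (Set.Iio c) ≤ nuM μ n (Set.Iio c) := by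
              rw [nuM_apply μ n measurableSet_Iio, h8]
              calc (n (Set.Iic t₀))⁻¹ * μ (Set.Iio c)
                  = ∫⁻ _ in Set.Iio c, (n (Set.Iic t₀))⁻¹ ∂μ := (setLIntegral_const _ _).symm
                _ ≤ _ := setLIntegral_mono' measurableSet_Iio
                    (fun u hu => wM_anti n (le_of_lt (lt_of_lt_of_le hu hct)))
            have h2 : μ (Set.Iio c) ≤ n (Set.Iic t₀) * nuP μ n (Set.Ioi s) := by
              calc μ (Set.Iio c)
                  = n (Set.Iic t₀) * ((n (Set.Iic t₀))⁻¹ * μ (Set.Iio c)) := by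
                    rw [← mul_assoc, ENNReal.mul_inv_cancel hC'0 hC'fin.ne, one_mul]
                _ ≤ n (Set.Iic t₀) * nuM μ n (Set.Iio c) := mul_le_mul_right h1 _
                _ ≤ n (Set.Iic t₀) * nuP μ n (Set.Ioi s) := mul_le_mul_right hphic _
            exact h2.trans (mul_le_mul_left le_self_add _)
          · -- t₀ < c
            have hδ : nuM μ n (Set.Iio t₀) ≤ nuP μ n (Set.Ioi s) := hphi t₀ hct
            calc μ (Set.Iio c) ≤ 1 := prob_le_one
              _ = (nuM μ n (Set.Iio t₀))⁻¹ * nuM μ n (Set.Iio t₀) :=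
                  (ENNReal.inv_mul_cancel hδM.ne' hδMfin).symm
              _ ≤ (nuM μ n (Set.Iio t₀))⁻¹ * nuP μ n (Set.Ioi s) := mul_le_mul_right hδ _
              _ ≤ (n (Set.Iic t₀) + (nuM μ n (Set.Iio t₀))⁻¹) * nuP μ n (Set.Ioi s) :=
                  mul_le_mul_left le_add_self _
        · rw [mubarGinv, if_neg hne]
          simp
      calc ENNReal.ofReal (1 + (μ (Set.Ici s)).toReal - mubarGinv μ n (Dmu μ n s))
          ≤ μ (Set.Ici s) + ENNReal.ofReal (1 - mubarGinv μ n (Dmu μ n s)) := hsplit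
        _ ≤ n (Set.Ici s₀) * nuP μ n (Set.Ioi s)
            + (n (Set.Iic t₀) + (nuM μ n (Set.Iio t₀))⁻¹) * nuP μ n (Set.Ioi s) :=
            add_le_add hparta hpartb
        _ = (n (Set.Ici s₀) + (n (Set.Iic t₀) + (nuM μ n (Set.Iio t₀))⁻¹))
            * nuP μ n (Set.Ioi s) := (add_mul _ _ _).symm
        _ ≤ K * nuP μ n (Set.Ioi s) := by
            refine mul_le_mul_left ?_ _
            rw [hKdef, ← add_assoc]
            exact le_self_add
    -- dyadic shells
    set r : ℕ → ℝ≥0∞ := fun k => nuP μ n (Set.Ioi s₀) / 2 ^ (k + 1) with hrdef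
    have hrstep : ∀ k : ℕ, r (k + 1) = r k / 2 := by
      intro k
      simp only [hrdef]
      rw [pow_succ, div_eq_mul_inv,
        ENNReal.mul_inv (Or.inr ENNReal.ofNat_ne_top) (Or.inl (ENNReal.pow_ne_top ENNReal.ofNat_ne_top)),
        ← mul_assoc, ← div_eq_mul_inv, ← div_eq_mul_inv]
    have hr0 : ∀ k : ℕ, r k ≠ 0 := fun k =>
      (ENNReal.div_pos hδP.ne' (ENNReal.pow_ne_top ENNReal.ofNat_ne_top)).ne'
    have hrtop : ∀ k : ℕ, r k ≠ ⊤ := fun k =>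
      (ENNReal.div_lt_top hδPfin (pow_ne_zero _ two_ne_zero)).ne
    have hrltδ : ∀ k : ℕ, r k < nuP μ n (Set.Ioi s₀) := by
      intro k
      induction k with
      | zero => simpa [hrdef, pow_one] using ENNReal.half_lt_self hδP.ne' hδPfin
      | succ k ih =>
        calc r (k + 1) = r k / 2 := hrstep k
          _ ≤ r k := ENNReal.half_le_self
          _ < _ := ih
    have hrsucc : ∀ k : ℕ, r k = r (k + 1) + r (k + 1) := by
      intro k
      rw [hrstep k, ENNReal.add_halves]
    choose u hu using fun k : ℕ => aux_exists_tail_eq (nuP μ n)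
      (nuP_singleton μ n hatomless) (hr0 k)
      ((hrltδ k).trans_le (measure_mono (Set.subset_univ _)))
    have hrdec : ∀ k : ℕ, r (k + 1) < r k := by
      intro k
      rw [hrstep k]
      exact ENNReal.half_lt_self (hr0 k) (hrtop k)
    have husucc : ∀ k : ℕ, u k < u (k + 1) := by
      intro k
      by_contra hcon
      push_neg at hcon
      have h1 : nuP μ n (Set.Ioi (u k)) ≤ nuP μ n (Set.Ioi (u (k + 1))) :=
        measure_mono (Set.Ioi_subset_Ioi hcon)
      rw [hu k, hu (k + 1)] at h1
      exact absurd h1 (not_le.2 (hrdec k))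
    have hmono' : Monotone u := (strictMono_nat_of_lt_succ husucc).monotone
    have hus₀ : ∀ k : ℕ, s₀ < u k := by
      intro k
      by_contra hcon
      push_neg at hcon
      have h1 : nuP μ n (Set.Ioi s₀) ≤ nuP μ n (Set.Ioi (u k)) :=
        measure_mono (Set.Ioi_subset_Ioi hcon)
      rw [hu k] at h1
      exact absurd h1 (not_le.2 (hrltδ k))
    have hE : ∀ k : ℕ, nuP μ n (Set.Ioc (u k) (u (k + 1))) = r (k + 1) := by
      intro k
      have hd : Set.Ioc (u k) (u (k + 1)) = Set.Ioi (u k) \ Set.Ioi (u (k + 1)) :=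
        (Set.Ioi_diff_Ioi).symm
      rw [hd, measure_diff (Set.Ioi_subset_Ioi (husucc k).le)
        measurableSet_Ioi.nullMeasurableSet (measure_ne_top _ _), hu, hu, hrsucc k,
        ENNReal.add_sub_cancel_right (hrtop (k + 1))]
    have h2K0 : (2 : ℝ≥0∞) * K ≠ 0 := mul_ne_zero two_ne_zero hK0
    have h2Ktop : (2 : ℝ≥0∞) * K ≠ ⊤ := ENNReal.mul_ne_top ENNReal.ofNat_ne_top hKtop
    have hterm : ∀ k : ℕ,
        (2 * K)⁻¹ ≤ ∫⁻ s in Set.Ioc (u k) (u (k + 1)), psiPlusIntegrand μ n s ∂μ := by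
      intro k
      have hKr0 : K * r k ≠ 0 := mul_ne_zero hK0 (hr0 k)
      have hKrtop : K * r k ≠ ⊤ := ENNReal.mul_ne_top hKtop (hrtop k)
      have hsub0 : Set.Ioc (u k) (u (k + 1)) ⊆ Set.Ici (0 : ℝ) := fun x hx =>
        le_of_lt (lt_trans (lt_trans hs₀pos (hus₀ k)) hx.1)
      have hbound : ∀ s ∈ Set.Ioc (u k) (u (k + 1)),
          (n (Set.Ici s))⁻¹ * (K * r k)⁻¹ ≤ psiPlusIntegrand μ n s := by
        intro s hs
        have hss₀ : s₀ < s := lt_trans (hus₀ k) hs.1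
        have hνs : nuP μ n (Set.Ioi s) ≤ r k := by
          rw [← hu k]
          exact measure_mono (Set.Ioi_subset_Ioi hs.1.le)
        have hXle : ENNReal.ofReal (1 + (μ (Set.Ici s)).toReal - mubarGinv μ n (Dmu μ n s))
            ≤ K * r k := (hkey s hss₀).trans (mul_le_mul_right hνs _)
        rw [psiPlusIntegrand, ← ENNReal.mul_inv (Or.inr hKrtop) (Or.inr hKr0)]
        exact ENNReal.inv_le_inv.2 (mul_le_mul_right hXle _)
      have harith : r (k + 1) * (K * r k)⁻¹ = (2 * K)⁻¹ := by
        have h2 : K * r k = (2 * K) * r (k + 1) := by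
          rw [hrsucc k, ← two_mul]
          ring
        rw [h2, ENNReal.mul_inv (Or.inl h2K0) (Or.inl h2Ktop), mul_comm (r (k + 1)) _,
          mul_assoc, ENNReal.inv_mul_cancel (hr0 (k + 1)) (hrtop (k + 1)), mul_one]
      calc (2 * K)⁻¹ = r (k + 1) * (K * r k)⁻¹ := harith.symm
        _ = nuP μ n (Set.Ioc (u k) (u (k + 1))) * (K * r k)⁻¹ := by rw [hE k]
        _ = (∫⁻ s in Set.Ioc (u k) (u (k + 1)), (n (Set.Ici s))⁻¹ ∂μ) * (K * r k)⁻¹ := by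
            rw [nuP_apply μ n measurableSet_Ioc, Set.inter_eq_self_of_subset_left hsub0]
        _ = ∫⁻ s in Set.Ioc (u k) (u (k + 1)), (n (Set.Ici s))⁻¹ * (K * r k)⁻¹ ∂μ :=
            (lintegral_mul_const _ (wP_measurable n)).symm
        _ ≤ _ := setLIntegral_mono' measurableSet_Ioc hbound
    have hdisj : Pairwise (Function.onFun Disjoint fun k : ℕ => Set.Ioc (u k) (u (k + 1))) := by
      intro i j hij
      rcases hij.lt_or_gt with h | h
      · refine Set.disjoint_left.2 fun x hxi hxj => ?_
        exact lt_irrefl x (lt_of_le_of_lt (hxi.2.trans (hmono' (show i + 1 ≤ j by omega))) hxj.1)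
      · refine Set.disjoint_left.2 fun x hxi hxj => ?_
        exact lt_irrefl x (lt_of_le_of_lt (hxj.2.trans (hmono' (show j + 1 ≤ i by omega))) hxi.1)
    have hUsub : (⋃ k : ℕ, Set.Ioc (u k) (u (k + 1))) ⊆ Set.Ioi (0 : ℝ) := by
      intro x hx
      obtain ⟨k, hk⟩ := Set.mem_iUnion.1 hx
      exact lt_trans (lt_trans hs₀pos (hus₀ k)) hk.1
    have htot : (⊤ : ℝ≥0∞) ≤ ∫⁻ s in Set.Ioi (0 : ℝ), psiPlusIntegrand μ n s ∂μ := by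
      calc (⊤ : ℝ≥0∞) = ∑' _ : ℕ, (2 * K)⁻¹ :=
            (ENNReal.tsum_const_eq_top_of_ne_zero (ENNReal.inv_ne_zero.2 h2Ktop)).symm
        _ ≤ ∑' k : ℕ, ∫⁻ s in Set.Ioc (u k) (u (k + 1)), psiPlusIntegrand μ n s ∂μ :=
            ENNReal.tsum_le_tsum hterm
        _ = ∫⁻ s in ⋃ k : ℕ, Set.Ioc (u k) (u (k + 1)), psiPlusIntegrand μ n s ∂μ :=
            (lintegral_iUnion (fun k => measurableSet_Ioc) hdisj _).symm
        _ ≤ _ := lintegral_mono_set hUsub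
    exact top_le_iff.1 htot


lemma ofReal_one_sub_toReal (μ : Measure ℝ) [IsProbabilityMeasure μ] (c : ℝ) :
    ENNReal.ofReal (1 - (μ (Set.Ici c)).toReal) = μ (Set.Iio c) := by
  have h5 : ((1 : ℝ≥0∞) - μ (Set.Ici c)).toReal = 1 - (μ (Set.Ici c)).toReal := by
    rw [ENNReal.toReal_sub_of_le prob_le_one ENNReal.one_ne_top, ENNReal.toReal_one]
  rw [← h5, ENNReal.ofReal_toReal (lt_of_le_of_lt (tsub_le_self) ENNReal.one_lt_top).ne]
  rw [← prob_compl_eq_one_sub measurableSet_Ici, Set.compl_Ici]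

lemma minusDiverge (μ n : Measure ℝ) [IsProbabilityMeasure μ]
    (hatomless : ∀ x : ℝ, μ {x} = 0)
    (hneg : 0 < μ (Set.Iio (0 : ℝ))) (hpos : 0 < μ (Set.Ioi (0 : ℝ)))
    (hnfin : ∀ s : ℝ, 0 < s → n (Set.Ici s) < ⊤ ∧ n (Set.Iic (-s)) < ⊤)
    (hcompat : (⨆ y : ℝ, Dmu μ n y) = (⨆ x : ℝ, Gmu μ n x)) :
    ∫⁻ s in Set.Iio (0 : ℝ), psiMinusIntegrand μ n s ∂μ = ⊤ := by
  have hvv : nuP μ n Set.univ = nuM μ n Set.univ := by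
    rw [nuP_univ, nuM_univ, hcompat]
  obtain ⟨s₀, hs₀pos, hs₀⟩ : ∃ s₀ : ℝ, 0 < s₀ ∧ 0 < μ (Set.Ioi s₀) := by
    by_contra hc
    push_neg at hc
    have h1 : Set.Ioi (0 : ℝ) ⊆ ⋃ m : ℕ, Set.Ioi ((1 : ℝ) / (m + 1)) := by
      intro x hx
      obtain ⟨m, hm⟩ := exists_nat_one_div_lt (Set.mem_Ioi.1 hx)
      exact Set.mem_iUnion.2 ⟨m, hm⟩
    have h2 : μ (Set.Ioi (0 : ℝ)) ≤ ∑' m : ℕ, μ (Set.Ioi ((1 : ℝ) / (m + 1))) :=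
      (measure_mono h1).trans (measure_iUnion_le _)
    have h3 : ∀ m : ℕ, μ (Set.Ioi ((1 : ℝ) / (m + 1))) = 0 := fun m =>
      le_antisymm (hc _ (by positivity)) zero_le
    rw [tsum_congr h3, tsum_zero] at h2
    exact absurd h2 (not_le.2 hpos)
  obtain ⟨t₀, ht₀neg, ht₀⟩ : ∃ t₀ : ℝ, t₀ < 0 ∧ 0 < μ (Set.Iio t₀) := by
    by_contra hc
    push_neg at hc
    have h1 : Set.Iio (0 : ℝ) ⊆ ⋃ m : ℕ, Set.Iio (-((1 : ℝ) / (m + 1))) := by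
      intro x hx
      obtain ⟨m, hm⟩ := exists_nat_one_div_lt (show (0:ℝ) < -x by simpa using hx)
      exact Set.mem_iUnion.2 ⟨m, by simp only [Set.mem_Iio]; linarith⟩
    have h2 : μ (Set.Iio (0 : ℝ)) ≤ ∑' m : ℕ, μ (Set.Iio (-((1 : ℝ) / (m + 1)))) :=
      (measure_mono h1).trans (measure_iUnion_le _)
    have h3 : ∀ m : ℕ, μ (Set.Iio (-((1 : ℝ) / (m + 1)))) = 0 := fun m =>
      le_antisymm (hc _ (neg_lt_zero.2 (by positivity))) zero_le
    rw [tsum_congr h3, tsum_zero] at h2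
    exact absurd h2 (not_le.2 hneg)
  have hCfin : n (Set.Ici s₀) < ⊤ := (hnfin s₀ hs₀pos).1
  have hC'fin : n (Set.Iic t₀) < ⊤ := by
    have h := (hnfin (-t₀) (by linarith)).2
    rwa [neg_neg] at h
  rcases eq_or_ne (nuM μ n Set.univ) ⊤ with hcase | hcase
  · -- Case A : total mass infinite
    have hbd : ∀ s : ℝ, (n (Set.Iic s))⁻¹ * (ENNReal.ofReal 2)⁻¹ ≤ psiMinusIntegrand μ n s := by
      intro s
      rw [psiMinusIntegrand, ← ENNReal.mul_inv (Or.inr (by simp)) (Or.inr (by simp))]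
      refine ENNReal.inv_le_inv.2 (mul_le_mul_right (ENNReal.ofReal_le_ofReal ?_) _)
      have h1 : mubarDinv μ n (Gmu μ n s) ≤ 1 := by
        rw [mubarDinv]; split_ifs
        · simpa using ENNReal.toReal_mono ENNReal.one_ne_top
            (prob_le_one (μ := μ) (s := Set.Ici _))
        · exact zero_le_one
      have h2 : 0 ≤ (μ (Set.Ici s)).toReal := ENNReal.toReal_nonneg
      linarith
    have hIio : ∫⁻ s in Set.Iio (0 : ℝ), (n (Set.Iic s))⁻¹ ∂μ = nuM μ n (Set.Iio 0) := by
      rw [nuM_apply μ n measurableSet_Iio,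
        Set.inter_eq_self_of_subset_left Set.Iio_subset_Iic_self]
    have hν0 : nuM μ n (Set.Ici 0) = 0 := by
      rw [nuM_apply μ n measurableSet_Ici]
      have h4 : Set.Ici (0 : ℝ) ∩ Set.Iic 0 = {0} := by
        ext x
        simp only [Set.mem_inter_iff, Set.mem_Iic, Set.mem_Ici, Set.mem_singleton_iff]
        constructor
        · rintro ⟨h5, h6⟩; linarith
        · rintro rfl; exact ⟨le_rfl, le_rfl⟩
      rw [h4]
      exact setLIntegral_measure_zero _ _ (hatomless 0)
    have hνIio : nuM μ n (Set.Iio 0) = ⊤ := by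
      have h5 := meas_Iio_add_Ici (nuM μ n) 0
      rw [hν0, add_zero, hcase] at h5
      exact h5
    have hge : (⊤ : ℝ≥0∞) ≤ ∫⁻ s in Set.Iio (0 : ℝ), psiMinusIntegrand μ n s ∂μ := by
      calc (⊤ : ℝ≥0∞) = nuM μ n (Set.Iio 0) * (ENNReal.ofReal 2)⁻¹ := by
            rw [hνIio, ENNReal.top_mul (by simp)]
        _ = (∫⁻ s in Set.Iio (0 : ℝ), (n (Set.Iic s))⁻¹ ∂μ) * (ENNReal.ofReal 2)⁻¹ := by
            rw [hIio]
        _ = ∫⁻ s in Set.Iio (0 : ℝ), (n (Set.Iic s))⁻¹ * (ENNReal.ofReal 2)⁻¹ ∂μ :=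
            (lintegral_mul_const _ (wM_measurable n)).symm
        _ ≤ _ := lintegral_mono fun s => hbd s
    exact top_le_iff.1 hge
  · -- Case B : total mass finite
    have hfin' : nuP μ n Set.univ ≠ ⊤ := by rw [hvv]; exact hcase
    haveI : IsFiniteMeasure (nuP μ n) := ⟨lt_top_iff_ne_top.2 hfin'⟩
    haveI : IsFiniteMeasure (nuM μ n) := ⟨lt_top_iff_ne_top.2 hcase⟩
    have hC0 : n (Set.Ici s₀) ≠ 0 := by
      intro h0
      have h5 : nuP μ n (Set.Ioi s₀) = ⊤ := by
        rw [nuP_apply μ n measurableSet_Ioi]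
        have h6 : ∀ u ∈ Set.Ioi s₀ ∩ Set.Ici 0, (⊤ : ℝ≥0∞) ≤ (n (Set.Ici u))⁻¹ := by
          intro u hu
          have h7 : n (Set.Ici u) = 0 :=
            le_antisymm (h0 ▸ measure_mono (Set.Ici_subset_Ici.2 (le_of_lt hu.1))) zero_le
          simp [h7]
        have h8 : Set.Ioi s₀ ∩ Set.Ici 0 = Set.Ioi s₀ :=
          Set.inter_eq_self_of_subset_left (fun x hx => le_of_lt (lt_trans hs₀pos hx))
        refine top_le_iff.1 ?_
        calc (⊤ : ℝ≥0∞) = ⊤ * μ (Set.Ioi s₀ ∩ Set.Ici 0) := by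
              rw [h8]; exact (ENNReal.top_mul hs₀.ne').symm
          _ = ∫⁻ _ in Set.Ioi s₀ ∩ Set.Ici 0, (⊤ : ℝ≥0∞) ∂μ := (setLIntegral_const _ _).symm
          _ ≤ _ := setLIntegral_mono' (measurableSet_Ioi.inter measurableSet_Ici) h6
      exact hfin' (top_le_iff.1 ((h5 ▸ measure_mono (Set.subset_univ _) : (⊤:ℝ≥0∞) ≤ _)))
    have hC'0 : n (Set.Iic t₀) ≠ 0 := by
      intro h0
      have h5 : nuM μ n (Set.Iio t₀) = ⊤ := by
        rw [nuM_apply μ n measurableSet_Iio]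
        have h6 : ∀ u ∈ Set.Iio t₀ ∩ Set.Iic 0, (⊤ : ℝ≥0∞) ≤ (n (Set.Iic u))⁻¹ := by
          intro u hu
          have h7 : n (Set.Iic u) = 0 :=
            le_antisymm (h0 ▸ measure_mono (Set.Iic_subset_Iic.2 (le_of_lt hu.1))) zero_le
          simp [h7]
        have h8 : Set.Iio t₀ ∩ Set.Iic 0 = Set.Iio t₀ :=
          Set.inter_eq_self_of_subset_left (fun x hx => le_of_lt (lt_trans hx ht₀neg))
        refine top_le_iff.1 ?_
        calc (⊤ : ℝ≥0∞) = ⊤ * μ (Set.Iio t₀ ∩ Set.Iic 0) := by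
              rw [h8]; exact (ENNReal.top_mul ht₀.ne').symm
          _ = ∫⁻ _ in Set.Iio t₀ ∩ Set.Iic 0, (⊤ : ℝ≥0∞) ∂μ := (setLIntegral_const _ _).symm
          _ ≤ _ := setLIntegral_mono' (measurableSet_Iio.inter measurableSet_Iic) h6
      exact hcase (top_le_iff.1 ((h5 ▸ measure_mono (Set.subset_univ _) : (⊤:ℝ≥0∞) ≤ _)))
    have hδP : 0 < nuP μ n (Set.Ioi s₀) := by
      have h1 : (n (Set.Ici s₀))⁻¹ * μ (Set.Ioi s₀) ≤ nuP μ n (Set.Ioi s₀) := by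
        have h8 : Set.Ioi s₀ ∩ Set.Ici 0 = Set.Ioi s₀ :=
          Set.inter_eq_self_of_subset_left (fun x hx => le_of_lt (lt_trans hs₀pos hx))
        rw [nuP_apply μ n measurableSet_Ioi, h8]
        calc (n (Set.Ici s₀))⁻¹ * μ (Set.Ioi s₀)
            = ∫⁻ _ in Set.Ioi s₀, (n (Set.Ici s₀))⁻¹ ∂μ := (setLIntegral_const _ _).symm
          _ ≤ _ := setLIntegral_mono' measurableSet_Ioi (fun u hu => wP_mono n (le_of_lt hu))
      exact lt_of_lt_of_le (ENNReal.mul_pos (ENNReal.inv_ne_zero.2 hCfin.ne) hs₀.ne') h1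
    have hδM : 0 < nuM μ n (Set.Iio t₀) := by
      have h1 : (n (Set.Iic t₀))⁻¹ * μ (Set.Iio t₀) ≤ nuM μ n (Set.Iio t₀) := by
        have h8 : Set.Iio t₀ ∩ Set.Iic 0 = Set.Iio t₀ :=
          Set.inter_eq_self_of_subset_left (fun x hx => le_of_lt (lt_trans hx ht₀neg))
        rw [nuM_apply μ n measurableSet_Iio, h8]
        calc (n (Set.Iic t₀))⁻¹ * μ (Set.Iio t₀)
            = ∫⁻ _ in Set.Iio t₀, (n (Set.Iic t₀))⁻¹ ∂μ := (setLIntegral_const _ _).symm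
          _ ≤ _ := setLIntegral_mono' measurableSet_Iio (fun u hu => wM_anti n (le_of_lt hu))
      exact lt_of_lt_of_le (ENNReal.mul_pos (ENNReal.inv_ne_zero.2 hC'fin.ne) ht₀.ne') h1
    have hδMfin : nuM μ n (Set.Iio t₀) ≠ ⊤ := measure_ne_top _ _
    have hδPfin : nuP μ n (Set.Ioi s₀) ≠ ⊤ := measure_ne_top _ _
    set K : ℝ≥0∞ := n (Set.Iic t₀) + n (Set.Ici s₀) + (nuP μ n (Set.Ioi s₀))⁻¹ + 1 with hKdef
    have hK0 : K ≠ 0 := by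
      have h1 : (1 : ℝ≥0∞) ≤ K := le_add_self
      intro h; rw [h] at h1; exact (not_le.2 zero_lt_one) h1
    have hKtop : K ≠ ⊤ := by
      rw [hKdef]
      exact ENNReal.add_ne_top.2 ⟨ENNReal.add_ne_top.2 ⟨ENNReal.add_ne_top.2
        ⟨hC'fin.ne, hCfin.ne⟩, ENNReal.inv_ne_top.2 hδP.ne'⟩, ENNReal.one_ne_top⟩
    have hkey : ∀ s : ℝ, s < t₀ →
        ENNReal.ofReal (1 + mubarDinv μ n (Gmu μ n s) - (μ (Set.Ici s)).toReal)
          ≤ K * nuM μ n (Set.Iio s) := by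
      intro s hs
      have hsplit : ENNReal.ofReal (1 + mubarDinv μ n (Gmu μ n s) - (μ (Set.Ici s)).toReal)
          ≤ ENNReal.ofReal (mubarDinv μ n (Gmu μ n s)) + μ (Set.Iio s) := by
        have h1 : 1 + mubarDinv μ n (Gmu μ n s) - (μ (Set.Ici s)).toReal
            = mubarDinv μ n (Gmu μ n s) + (1 - (μ (Set.Ici s)).toReal) := by ring
        rw [h1]
        refine le_trans ENNReal.ofReal_add_le (add_le_add_right ?_ _)
        rw [ofReal_one_sub_toReal]
      -- part (a')
      have hparta : μ (Set.Iio s) ≤ n (Set.Iic t₀) * nuM μ n (Set.Iio s) := by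
        have h8 : Set.Iio s ∩ Set.Iic 0 = Set.Iio s :=
          Set.inter_eq_self_of_subset_left
            (fun x hx => le_of_lt (lt_trans (lt_trans hx hs) ht₀neg))
        have h1 : (n (Set.Iic t₀))⁻¹ * μ (Set.Iio s) ≤ nuM μ n (Set.Iio s) := by
          rw [nuM_apply μ n measurableSet_Iio, h8]
          calc (n (Set.Iic t₀))⁻¹ * μ (Set.Iio s)
              = ∫⁻ _ in Set.Iio s, (n (Set.Iic t₀))⁻¹ ∂μ := (setLIntegral_const _ _).symm
            _ ≤ _ := setLIntegral_mono' measurableSet_Iio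
                (fun u hu => wM_anti n (le_of_lt (lt_trans hu hs)))
        calc μ (Set.Iio s) = n (Set.Iic t₀) * ((n (Set.Iic t₀))⁻¹ * μ (Set.Iio s)) := by
              rw [← mul_assoc, ENNReal.mul_inv_cancel hC'0 hC'fin.ne, one_mul]
          _ ≤ n (Set.Iic t₀) * nuM μ n (Set.Iio s) := mul_le_mul_right h1 _
      -- part (b')
      have hpartb : ENNReal.ofReal (mubarDinv μ n (Gmu μ n s))
          ≤ (n (Set.Ici s₀) + (nuP μ n (Set.Ioi s₀))⁻¹) * nuM μ n (Set.Iio s) := by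
        by_cases hne : (DinvSet μ n (Gmu μ n s)).Nonempty
        · rw [mubarDinv, if_pos hne]
          set c := sInf (DinvSet μ n (Gmu μ n s)) with hcdef
          have hc0 : 0 ≤ c := le_csInf hne (fun y hy => hy.1)
          have hlt : ∀ y : ℝ, c < y → Gmu μ n s < Dmu μ n y := by
            intro y hy
            obtain ⟨y₀, hy₀S, hyy₀⟩ := exists_lt_of_csInf_lt hne hy
            exact lt_of_lt_of_le hy₀S.2 (Dmu_mono μ n hyy₀.le)
          have hphi : ∀ y : ℝ, c < y → nuP μ n (Set.Ioi y) ≤ nuM μ n (Set.Iio s) := by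
            intro y hy
            have hDle : nuM μ n (Set.Ici s) ≤ nuP μ n (Set.Iic y) := by
              rw [← Dmu_eq, ← Gmu_eq]; exact (hlt y hy).le
            have e4 : nuM μ n (Set.Ici s) + nuP μ n (Set.Ioi y)
                ≤ nuM μ n (Set.Ici s) + nuM μ n (Set.Iio s) := by
              calc nuM μ n (Set.Ici s) + nuP μ n (Set.Ioi y)
                  ≤ nuP μ n (Set.Iic y) + nuP μ n (Set.Ioi y) := add_le_add_left hDle _
                _ = nuM μ n (Set.Iio s) + nuM μ n (Set.Ici s) := by
                    rw [meas_Iic_add_Ioi, meas_Iio_add_Ici, hvv]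
                _ = nuM μ n (Set.Ici s) + nuM μ n (Set.Iio s) := add_comm _ _
            exact (ENNReal.add_le_add_iff_left (measure_ne_top _ _)).1 e4
          have hphic : nuP μ n (Set.Ioi c) ≤ nuM μ n (Set.Iio s) := by
            have h1 : Set.Ioi c = ⋃ m : ℕ, Set.Ioi (c + (1 : ℝ) / (m + 1)) := by
              ext x
              simp only [Set.mem_iUnion, Set.mem_Ioi]
              constructor
              · intro hx
                obtain ⟨m, hm⟩ := exists_nat_one_div_lt (sub_pos.2 hx)
                exact ⟨m, by linarith⟩
              · rintro ⟨m, hm⟩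
                have hp : (0 : ℝ) < 1 / (m + 1) := by positivity
                linarith
            rw [h1, Directed.measure_iUnion (Monotone.directed_le (fun a b hab =>
              Set.Ioi_subset_Ioi (by
                have h9 : (1:ℝ)/(b+1) ≤ 1/(a+1) := one_div_le_one_div_of_le (by positivity)
                  (by exact_mod_cast add_le_add_left (Nat.cast_le.2 hab) 1)
                linarith)))]
            refine iSup_le fun m => hphi _ ?_
            have hp : (0 : ℝ) < 1 / (m + 1) := by positivity
            linarith
          rw [ENNReal.ofReal_toReal (measure_ne_top μ _)]
          rcases le_or_gt s₀ c with hcs | hcs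
          · -- s₀ ≤ c
            have h8 : Set.Ioi c ∩ Set.Ici 0 = Set.Ioi c :=
              Set.inter_eq_self_of_subset_left (fun x hx => le_trans hc0 (le_of_lt hx))
            have h1 : (n (Set.Ici s₀))⁻¹ * μ (Set.Ioi c) ≤ nuP μ n (Set.Ioi c) := by
              rw [nuP_apply μ n measurableSet_Ioi, h8]
              calc (n (Set.Ici s₀))⁻¹ * μ (Set.Ioi c)
                  = ∫⁻ _ in Set.Ioi c, (n (Set.Ici s₀))⁻¹ ∂μ := (setLIntegral_const _ _).symm
                _ ≤ _ := setLIntegral_mono' measurableSet_Ioi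
                    (fun u hu => wP_mono n (le_trans hcs (le_of_lt hu)))
            have h2 : μ (Set.Ici c) ≤ n (Set.Ici s₀) * nuM μ n (Set.Iio s) := by
              rw [meas_Ici_eq_Ioi (hatomless c)]
              calc μ (Set.Ioi c)
                  = n (Set.Ici s₀) * ((n (Set.Ici s₀))⁻¹ * μ (Set.Ioi c)) := by
                    rw [← mul_assoc, ENNReal.mul_inv_cancel hC0 hCfin.ne, one_mul]
                _ ≤ n (Set.Ici s₀) * nuP μ n (Set.Ioi c) := mul_le_mul_right h1 _
                _ ≤ n (Set.Ici s₀) * nuM μ n (Set.Iio s) := mul_le_mul_right hphic _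
            exact h2.trans (mul_le_mul_left le_self_add _)
          · -- c < s₀
            have hδ : nuP μ n (Set.Ioi s₀) ≤ nuM μ n (Set.Iio s) := hphi s₀ hcs
            calc μ (Set.Ici c) ≤ 1 := prob_le_one
              _ = (nuP μ n (Set.Ioi s₀))⁻¹ * nuP μ n (Set.Ioi s₀) :=
                  (ENNReal.inv_mul_cancel hδP.ne' hδPfin).symm
              _ ≤ (nuP μ n (Set.Ioi s₀))⁻¹ * nuM μ n (Set.Iio s) := mul_le_mul_right hδ _
              _ ≤ (n (Set.Ici s₀) + (nuP μ n (Set.Ioi s₀))⁻¹) * nuM μ n (Set.Iio s) :=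
                  mul_le_mul_left le_add_self _
        · rw [mubarDinv, if_neg hne]
          simp
      calc ENNReal.ofReal (1 + mubarDinv μ n (Gmu μ n s) - (μ (Set.Ici s)).toReal)
          ≤ ENNReal.ofReal (mubarDinv μ n (Gmu μ n s)) + μ (Set.Iio s) := hsplit
        _ ≤ (n (Set.Ici s₀) + (nuP μ n (Set.Ioi s₀))⁻¹) * nuM μ n (Set.Iio s)
            + n (Set.Iic t₀) * nuM μ n (Set.Iio s) := add_le_add hpartb hparta
        _ = ((n (Set.Ici s₀) + (nuP μ n (Set.Ioi s₀))⁻¹) + n (Set.Iic t₀))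
            * nuM μ n (Set.Iio s) := (add_mul _ _ _).symm
        _ ≤ K * nuM μ n (Set.Iio s) := by
            refine mul_le_mul_left ?_ _
            rw [hKdef]
            calc n (Set.Ici s₀) + (nuP μ n (Set.Ioi s₀))⁻¹ + n (Set.Iic t₀)
                = n (Set.Iic t₀) + n (Set.Ici s₀) + (nuP μ n (Set.Ioi s₀))⁻¹ := by ring
              _ ≤ _ := le_self_add
    -- dyadic shells (mirrored)
    set r : ℕ → ℝ≥0∞ := fun k => nuM μ n (Set.Iio t₀) / 2 ^ (k + 1) with hrdef
    have hrstep : ∀ k : ℕ, r (k + 1) = r k / 2 := by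
      intro k
      simp only [hrdef]
      rw [pow_succ, div_eq_mul_inv,
        ENNReal.mul_inv (Or.inr ENNReal.ofNat_ne_top) (Or.inl (ENNReal.pow_ne_top ENNReal.ofNat_ne_top)),
        ← mul_assoc, ← div_eq_mul_inv, ← div_eq_mul_inv]
    have hr0 : ∀ k : ℕ, r k ≠ 0 := fun k =>
      (ENNReal.div_pos hδM.ne' (ENNReal.pow_ne_top ENNReal.ofNat_ne_top)).ne'
    have hrtop : ∀ k : ℕ, r k ≠ ⊤ := fun k =>
      (ENNReal.div_lt_top hδMfin (pow_ne_zero _ two_ne_zero)).ne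
    have hrltδ : ∀ k : ℕ, r k < nuM μ n (Set.Iio t₀) := by
      intro k
      induction k with
      | zero => simpa [hrdef, pow_one] using ENNReal.half_lt_self hδM.ne' hδMfin
      | succ k ih =>
        calc r (k + 1) = r k / 2 := hrstep k
          _ ≤ r k := ENNReal.half_le_self
          _ < _ := ih
    have hrsucc : ∀ k : ℕ, r k = r (k + 1) + r (k + 1) := by
      intro k
      rw [hrstep k, ENNReal.add_halves]
    choose u hu using fun k : ℕ => aux_exists_head_eq (nuM μ n)
      (nuM_singleton μ n hatomless) (hr0 k)
      ((hrltδ k).trans_le (measure_mono (Set.subset_univ _)))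
    have hrdec : ∀ k : ℕ, r (k + 1) < r k := by
      intro k
      rw [hrstep k]
      exact ENNReal.half_lt_self (hr0 k) (hrtop k)
    have husucc : ∀ k : ℕ, u (k + 1) < u k := by
      intro k
      by_contra hcon
      push_neg at hcon
      have h1 : nuM μ n (Set.Iio (u k)) ≤ nuM μ n (Set.Iio (u (k + 1))) :=
        measure_mono (Set.Iio_subset_Iio hcon)
      rw [hu k, hu (k + 1)] at h1
      exact absurd h1 (not_le.2 (hrdec k))
    have hanti' : Antitone u := (strictAnti_nat_of_succ_lt husucc).antitone
    have hut₀ : ∀ k : ℕ, u k < t₀ := by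
      intro k
      by_contra hcon
      push_neg at hcon
      have h1 : nuM μ n (Set.Iio t₀) ≤ nuM μ n (Set.Iio (u k)) :=
        measure_mono (Set.Iio_subset_Iio hcon)
      rw [hu k] at h1
      exact absurd h1 (not_le.2 (hrltδ k))
    have hE : ∀ k : ℕ, nuM μ n (Set.Ico (u (k + 1)) (u k)) = r (k + 1) := by
      intro k
      have hd : Set.Ico (u (k + 1)) (u k) = Set.Iio (u k) \ Set.Iio (u (k + 1)) :=
        by ext x; simp [and_comm]
      rw [hd, measure_diff (Set.Iio_subset_Iio (husucc k).le)
        measurableSet_Iio.nullMeasurableSet (measure_ne_top _ _), hu, hu, hrsucc k,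
        ENNReal.add_sub_cancel_right (hrtop (k + 1))]
    have h2K0 : (2 : ℝ≥0∞) * K ≠ 0 := mul_ne_zero two_ne_zero hK0
    have h2Ktop : (2 : ℝ≥0∞) * K ≠ ⊤ := ENNReal.mul_ne_top ENNReal.ofNat_ne_top hKtop
    have hterm : ∀ k : ℕ,
        (2 * K)⁻¹ ≤ ∫⁻ s in Set.Ico (u (k + 1)) (u k), psiMinusIntegrand μ n s ∂μ := by
      intro k
      have hKr0 : K * r k ≠ 0 := mul_ne_zero hK0 (hr0 k)
      have hKrtop : K * r k ≠ ⊤ := ENNReal.mul_ne_top hKtop (hrtop k)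
      have hsub0 : Set.Ico (u (k + 1)) (u k) ⊆ Set.Iic (0 : ℝ) := fun x hx =>
        le_of_lt (lt_trans (lt_trans hx.2 (hut₀ k)) ht₀neg)
      have hbound : ∀ s ∈ Set.Ico (u (k + 1)) (u k),
          (n (Set.Iic s))⁻¹ * (K * r k)⁻¹ ≤ psiMinusIntegrand μ n s := by
        intro s hs
        have hst₀ : s < t₀ := lt_trans hs.2 (hut₀ k)
        have hνs : nuM μ n (Set.Iio s) ≤ r k := by
          rw [← hu k]
          exact measure_mono (Set.Iio_subset_Iio hs.2.le)
        have hXle : ENNReal.ofReal (1 + mubarDinv μ n (Gmu μ n s) - (μ (Set.Ici s)).toReal)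
            ≤ K * r k := (hkey s hst₀).trans (mul_le_mul_right hνs _)
        rw [psiMinusIntegrand, ← ENNReal.mul_inv (Or.inr hKrtop) (Or.inr hKr0)]
        exact ENNReal.inv_le_inv.2 (mul_le_mul_right hXle _)
      have harith : r (k + 1) * (K * r k)⁻¹ = (2 * K)⁻¹ := by
        have h2 : K * r k = (2 * K) * r (k + 1) := by
          rw [hrsucc k, ← two_mul]
          ring
        rw [h2, ENNReal.mul_inv (Or.inl h2K0) (Or.inl h2Ktop), mul_comm (r (k + 1)) _,
          mul_assoc, ENNReal.inv_mul_cancel (hr0 (k + 1)) (hrtop (k + 1)), mul_one]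
      calc (2 * K)⁻¹ = r (k + 1) * (K * r k)⁻¹ := harith.symm
        _ = nuM μ n (Set.Ico (u (k + 1)) (u k)) * (K * r k)⁻¹ := by rw [hE k]
        _ = (∫⁻ s in Set.Ico (u (k + 1)) (u k), (n (Set.Iic s))⁻¹ ∂μ) * (K * r k)⁻¹ := by
            rw [nuM_apply μ n measurableSet_Ico, Set.inter_eq_self_of_subset_left hsub0]
        _ = ∫⁻ s in Set.Ico (u (k + 1)) (u k), (n (Set.Iic s))⁻¹ * (K * r k)⁻¹ ∂μ :=
            (lintegral_mul_const _ (wM_measurable n)).symm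
        _ ≤ _ := setLIntegral_mono' measurableSet_Ico hbound
    have hdisj : Pairwise (Function.onFun Disjoint fun k : ℕ => Set.Ico (u (k + 1)) (u k)) := by
      intro i j hij
      rcases hij.lt_or_gt with h | h
      · refine Set.disjoint_left.2 fun x hxi hxj => ?_
        exact lt_irrefl x (lt_of_lt_of_le hxj.2 (le_trans (hanti' (show i + 1 ≤ j by omega)) hxi.1))
      · refine Set.disjoint_left.2 fun x hxi hxj => ?_
        exact lt_irrefl x (lt_of_lt_of_le hxi.2 (le_trans (hanti' (show j + 1 ≤ i by omega)) hxj.1))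
    have hUsub : (⋃ k : ℕ, Set.Ico (u (k + 1)) (u k)) ⊆ Set.Iio (0 : ℝ) := by
      intro x hx
      obtain ⟨k, hk⟩ := Set.mem_iUnion.1 hx
      exact lt_trans (lt_trans hk.2 (hut₀ k)) ht₀neg
    have htot : (⊤ : ℝ≥0∞) ≤ ∫⁻ s in Set.Iio (0 : ℝ), psiMinusIntegrand μ n s ∂μ := by
      calc (⊤ : ℝ≥0∞) = ∑' _ : ℕ, (2 * K)⁻¹ :=
            (ENNReal.tsum_const_eq_top_of_ne_zero (ENNReal.inv_ne_zero.2 h2Ktop)).symm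
        _ ≤ ∑' k : ℕ, ∫⁻ s in Set.Ico (u (k + 1)) (u k), psiMinusIntegrand μ n s ∂μ :=
            ENNReal.tsum_le_tsum hterm
        _ = ∫⁻ s in ⋃ k : ℕ, Set.Ico (u (k + 1)) (u k), psiMinusIntegrand μ n s ∂μ :=
            (lintegral_iUnion (fun k => measurableSet_Ico) hdisj _).symm
        _ ≤ _ := lintegral_mono_set hUsub
    exact top_le_iff.1 htot

end core

/-- With `b_μ = sup(supp μ) ∈ (0,∞]` and `a_μ = inf(supp μ) ∈ [−∞,0)`,
the full integrals defining the two branches diverge: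
`∫_{(0,∞)} [n([s,∞))·(1 + μ̄(s) − μ̄(G_μ⁻¹(D_μ(s))))]⁻¹ dμ(s) = ∞` and
`∫_{(−∞,0)} [n((−∞,s])·(1 + μ̄(D_μ⁻¹(G_μ(s))) − μ̄(s))]⁻¹ dμ(s) = ∞`;
in particular `ψ₊(y) = ∞` for every `y ≥ b_μ` (i.e. every `y` dominating the support)
and `ψ₋(z) = ∞` for every `z ≥ −a_μ` (i.e. whenever `−z` lies below the support). -/



theorem fullBranchIntegralsDiverge
    (μ n : MeasureTheory.Measure ℝ) [MeasureTheory.IsProbabilityMeasure μ]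
    (hatomless : ∀ x : ℝ, μ {x} = 0)
    (hneg : 0 < μ (Set.Iio (0 : ℝ))) (hpos : 0 < μ (Set.Ioi (0 : ℝ)))
    (hnfin : ∀ s : ℝ, 0 < s → n (Set.Ici s) < ⊤ ∧ n (Set.Iic (-s)) < ⊤)
    (hnsupp : ∀ x ∈ measSupport μ, 0 < n (Set.Iic x) ∧ 0 < n (Set.Ici x))
    (hcompat : (⨆ y : ℝ, Dmu μ n y) = (⨆ x : ℝ, Gmu μ n x))
    :
    (∫⁻ s in Set.Ioi (0 : ℝ), psiPlusIntegrand μ n s ∂μ = ⊤) ∧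
    (∫⁻ s in Set.Iio (0 : ℝ), psiMinusIntegrand μ n s ∂μ = ⊤) ∧
    (∀ y : ℝ, (∀ x ∈ measSupport μ, x ≤ y) → psiPlus μ n y = ⊤) ∧
    (∀ z : ℝ, (∀ x ∈ measSupport μ, -z ≤ x) → psiMinus μ n z = ⊤) := by
  have hplus := plusDiverge μ n hatomless hneg hpos hnfin hcompat
  have hminus := minusDiverge μ n hatomless hneg hpos hnfin hcompat
  refine ⟨hplus, hminus, ?_, ?_⟩
  · intro y hy
    have hnully : μ (Set.Ioi y) = 0 := by
      refine aux_null_of_forall_not_support μ isOpen_Ioi fun x hx hxs => ?_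
      exact absurd (hy x hxs) (not_le.2 hx)
    have hae : Set.Icc (0 : ℝ) y =ᵐ[μ] Set.Ioi (0 : ℝ) := by
      rw [MeasureTheory.ae_eq_set]
      constructor
      · refine le_antisymm (le_trans (measure_mono ?_) (hatomless 0).le) zero_le
        intro x hx
        simp only [Set.mem_diff, Set.mem_Icc, Set.mem_Ioi, not_lt] at hx
        simp [le_antisymm hx.2 hx.1.1]
      · refine le_antisymm (le_trans (measure_mono ?_) hnully.le) zero_le
        intro x hx
        simp only [Set.mem_diff, Set.mem_Icc, Set.mem_Ioi, not_and, not_le] at hx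
        exact hx.2 hx.1.le
    rw [psiPlus, setLIntegral_congr hae]
    exact hplus
  · intro z hz
    have hnullz : μ (Set.Iio (-z)) = 0 := by
      refine aux_null_of_forall_not_support μ isOpen_Iio fun x hx hxs => ?_
      exact absurd (hz x hxs) (not_le.2 hx)
    have hae : Set.Icc (-z) (0 : ℝ) =ᵐ[μ] Set.Iio (0 : ℝ) := by
      rw [MeasureTheory.ae_eq_set]
      constructor
      · refine le_antisymm (le_trans (measure_mono ?_) (hatomless 0).le) zero_le
        intro x hx
        simp only [Set.mem_diff, Set.mem_Icc, Set.mem_Iio, not_lt] at hx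
        simp [le_antisymm hx.1.2 hx.2]
      · refine le_antisymm (le_trans (measure_mono ?_) hnullz.le) zero_le
        intro x hx
        simp only [Set.mem_diff, Set.mem_Icc, Set.mem_Iio, not_and, not_le] at hx
        simp only [Set.mem_Iio]
        by_contra hcon
        push_neg at hcon
        exact absurd (hx.2 hcon) (not_lt.2 hx.1.le)
    rw [psiMinus, setLIntegral_congr hae]
    exact hminus
end

section
/- Weibull law: let a > 0, b > 0, let μ be the probability measure on (0,∞) with density x ↦ a·b·x^{b−1}·e^{−a·x^b} with respect to Lebesgue measure, and let n be the measure on (0,∞) with density x ↦ x⁻², so that n([s,∞)) = 1/s for s > 0. Then ψ_μ(x) = a·b·x^{b+1}/(b+1) for every x ≥ 0, and φ_μ(x) = ((b+1)·x/(a·b))^{1/(b+1)} for every x ≥ 0. In particular, for the exponential law with parameter a (b = 1), φ_μ(x) = √(2x/a). -/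
open MeasureTheory Filter
open scoped ENNReal Topology Classical

/-- The dual Hardy–Littlewood function `ψ_μ` of `μ` relative to `n`:
`ψ_μ(y) = ∫_{(0,y)} 1_{μ({s})=0} [μ̄(s)·n([s,∞))]⁻¹ dμ(s)
          + Σ_{0<s<y, μ({s})>0} log(μ̄(s)/μ̄(s+)) / n([s,∞))`,
with values in `[0,∞]` (and `ψ_μ(y) = 0` for `y ≤ 0`). -/
noncomputable def dualHL (μ n : MeasureTheory.Measure ℝ) (y : ℝ) : ℝ≥0∞ :=
  (∫⁻ s in Set.Ioo (0 : ℝ) y,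
      Set.indicator {t : ℝ | μ {t} = 0}
        (fun t => (μ (Set.Ici t) * n (Set.Ici t))⁻¹) s ∂μ)
  + ∑' s : {t : ℝ // 0 < t ∧ t < y ∧ 0 < μ {t}},
      ENNReal.ofReal
          (Real.log ((μ (Set.Ici (s : ℝ))).toReal / (μ (Set.Ioi (s : ℝ))).toReal))
        / n (Set.Ici (s : ℝ))

/-- The right-continuous inverse `φ_μ(l) = inf{y > 0 : ψ_μ(y) > l}`, with `inf ∅ = ∞`. -/
noncomputable def phiHL (μ n : MeasureTheory.Measure ℝ) (l : ℝ) : ℝ≥0∞ :=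
  if ({y : ℝ | 0 < y ∧ ENNReal.ofReal l < dualHL μ n y}).Nonempty
  then ENNReal.ofReal (sInf {y : ℝ | 0 < y ∧ ENNReal.ofReal l < dualHL μ n y})
  else ⊤


-- Auxiliary lemmas ----------------------------------------------------------

private lemma weib_deriv (a b : ℝ) {x : ℝ} (hx : 0 < x) :
    HasDerivAt (fun y : ℝ => -Real.exp (-(a * y ^ b)))
      (a * b * x ^ (b - 1) * Real.exp (-(a * x ^ b))) x := by
  have h1 : HasDerivAt (fun y : ℝ => y ^ b) (b * x ^ (b - 1)) x :=
    Real.hasDerivAt_rpow_const (Or.inl hx.ne')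
  have h2 : HasDerivAt (fun y : ℝ => -(a * y ^ b)) (-(a * (b * x ^ (b - 1)))) x :=
    (h1.const_mul a).neg
  have h3 := (Real.hasDerivAt_exp (-(a * x ^ b))).comp x h2
  have h4 : HasDerivAt (fun y : ℝ => -Real.exp (-(a * y ^ b))) _ x := h3.neg
  convert h4 using 1
  ring

private lemma weib_tendsto (a b : ℝ) (ha : 0 < a) (hb : 0 < b) :
    Tendsto (fun y : ℝ => -Real.exp (-(a * y ^ b))) atTop (𝓝 0) := by
  have h1 : Tendsto (fun y : ℝ => a * y ^ b) atTop atTop :=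
    (tendsto_rpow_atTop hb).const_mul_atTop ha
  have h2 : Tendsto (fun y : ℝ => -(a * y ^ b)) atTop atBot :=
    tendsto_neg_atTop_atBot.comp h1
  have h3 : Tendsto (fun y : ℝ => Real.exp (-(a * y ^ b))) atTop (𝓝 0) :=
    Real.tendsto_exp_atBot.comp h2
  simpa using h3.neg

private lemma weib_tail (a b : ℝ) (ha : 0 < a) (hb : 0 < b) {t : ℝ} (ht : 0 < t) :
    ∫⁻ x in Set.Ioi t,
        ENNReal.ofReal (a * b * x ^ (b - 1) * Real.exp (-(a * x ^ b)))
      = ENNReal.ofReal (Real.exp (-(a * t ^ b))) := by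
  have hderiv : ∀ x ∈ Set.Ioi t, HasDerivAt (fun y : ℝ => -Real.exp (-(a * y ^ b)))
      (a * b * x ^ (b - 1) * Real.exp (-(a * x ^ b))) x :=
    fun x hx => weib_deriv a b (ht.trans hx)
  have hnn : ∀ x ∈ Set.Ioi t, 0 ≤ a * b * x ^ (b - 1) * Real.exp (-(a * x ^ b)) := by
    intro x hx
    have hx0 : (0:ℝ) ≤ x := (ht.trans hx).le
    positivity
  have hcont : ContinuousWithinAt (fun y : ℝ => -Real.exp (-(a * y ^ b))) (Set.Ici t) t :=
    (weib_deriv a b ht).continuousAt.continuousWithinAt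
  have htend := weib_tendsto a b ha hb
  have hint := integrableOn_Ioi_deriv_of_nonneg hcont hderiv hnn htend
  have hval := integral_Ioi_of_hasDerivAt_of_nonneg hcont hderiv hnn htend
  rw [← ofReal_integral_eq_lintegral_ofReal hint
      (ae_restrict_of_forall_mem measurableSet_Ioi hnn)]
  rw [hval]; norm_num

private lemma inv_tail {t : ℝ} (ht : 0 < t) :
    ∫⁻ x in Set.Ioi t, ENNReal.ofReal ((x ^ 2)⁻¹) = ENNReal.ofReal t⁻¹ := by
  have hderiv : ∀ x ∈ Set.Ioi t, HasDerivAt (fun y : ℝ => -y⁻¹) ((x ^ 2)⁻¹) x := by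
    intro x hx
    have h : HasDerivAt (fun y : ℝ => -y⁻¹) (-(-(x ^ 2)⁻¹)) x := (hasDerivAt_inv (ht.trans hx).ne').neg
    simpa using h
  have hnn : ∀ x ∈ Set.Ioi t, (0:ℝ) ≤ (x ^ 2)⁻¹ := fun x _ => by positivity
  have hcont : ContinuousWithinAt (fun y : ℝ => -y⁻¹) (Set.Ici t) t :=
    ((continuousAt_inv₀ ht.ne').neg).continuousWithinAt
  have htend : Tendsto (fun y : ℝ => -y⁻¹) atTop (𝓝 0) := by
    simpa using (tendsto_inv_atTop_zero (𝕜 := ℝ)).neg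
  have hint := integrableOn_Ioi_deriv_of_nonneg hcont hderiv hnn htend
  have hval := integral_Ioi_of_hasDerivAt_of_nonneg hcont hderiv hnn htend
  rw [← ofReal_integral_eq_lintegral_ofReal hint
      (ae_restrict_of_forall_mem measurableSet_Ioi hnn)]
  rw [hval]; norm_num

private theorem wpsi (a b : ℝ) (ha : 0 < a) (hb : 0 < b) (μ n : Measure ℝ)
    (hμ : μ = (MeasureTheory.volume.restrict (Set.Ioi (0 : ℝ))).withDensity
        (fun x => ENNReal.ofReal (a * b * x ^ (b - 1) * Real.exp (-(a * x ^ b)))))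
    (hμIci : ∀ t : ℝ, 0 < t → μ (Set.Ici t) = ENNReal.ofReal (Real.exp (-(a * t ^ b))))
    (hnIci : ∀ t : ℝ, 0 < t → n (Set.Ici t) = ENNReal.ofReal t⁻¹)
    (hatom : ∀ t : ℝ, μ {t} = 0)
    (x : ℝ) (hx : 0 ≤ x) :
    dualHL μ n x = ENNReal.ofReal (a * b * x ^ (b + 1) / (b + 1)) := by
  have hb1 : (0:ℝ) < b + 1 := by linarith
  rw [dualHL]
  have hempty : IsEmpty {t : ℝ // 0 < t ∧ t < x ∧ 0 < μ {t}} :=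
    ⟨fun s => by have := s.2.2.2; rw [hatom] at this; exact lt_irrefl _ this⟩
  haveI := hempty
  rw [tsum_empty, add_zero]
  have hind : Set.indicator {t : ℝ | μ {t} = 0}
      (fun t => (μ (Set.Ici t) * n (Set.Ici t))⁻¹)
      = fun t => (μ (Set.Ici t) * n (Set.Ici t))⁻¹ := by
    rw [show {t : ℝ | μ {t} = 0} = Set.univ from Set.eq_univ_of_forall hatom,
      Set.indicator_univ]
  rw [hind]
  have h1 : ∫⁻ s in Set.Ioo (0:ℝ) x, (μ (Set.Ici s) * n (Set.Ici s))⁻¹ ∂μ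
      = ∫⁻ s in Set.Ioo (0:ℝ) x, ENNReal.ofReal (s * Real.exp (a * s ^ b)) ∂μ := by
    refine setLIntegral_congr_fun measurableSet_Ioo (fun s hs => ?_)
    have hs0 : 0 < s := hs.1
    rw [hμIci s hs0, hnIci s hs0, ← ENNReal.ofReal_mul (Real.exp_pos _).le,
      ← ENNReal.ofReal_inv_of_pos (by positivity)]
    congr 1
    rw [mul_inv, inv_inv, Real.exp_neg, inv_inv, mul_comm]
  rw [h1, hμ, restrict_withDensity measurableSet_Ioo,
    Measure.restrict_restrict measurableSet_Ioo,
    Set.inter_eq_left.mpr (fun s hs => hs.1),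
    lintegral_withDensity_eq_lintegral_mul _ (by fun_prop) (by fun_prop)]
  have h2 : ∫⁻ s in Set.Ioo (0:ℝ) x,
      (ENNReal.ofReal (a * b * s ^ (b - 1) * Real.exp (-(a * s ^ b)))
        * ENNReal.ofReal (s * Real.exp (a * s ^ b))) ∂volume
      = ∫⁻ s in Set.Ioo (0:ℝ) x, ENNReal.ofReal (a * b * s ^ b) ∂volume := by
    refine setLIntegral_congr_fun measurableSet_Ioo (fun s hs => ?_)
    have hs0 : 0 < s := hs.1
    rw [← ENNReal.ofReal_mul (by positivity)]
    congr 1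
    have hpow : s ^ (b - 1) * s = s ^ b := by
      rw [Real.rpow_sub hs0, Real.rpow_one, div_mul_cancel₀ _ hs0.ne']
    calc a * b * s ^ (b - 1) * Real.exp (-(a * s ^ b)) * (s * Real.exp (a * s ^ b))
        = a * b * (s ^ (b - 1) * s) * (Real.exp (-(a * s ^ b)) * Real.exp (a * s ^ b)) := by ring
      _ = a * b * s ^ b := by
          rw [hpow, ← Real.exp_add, neg_add_cancel, Real.exp_zero, mul_one]
  simp only [Pi.mul_apply]
  rw [h2]
  have hint : IntegrableOn (fun s : ℝ => a * b * s ^ b) (Set.Ioo 0 x) volume := by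
    have := (intervalIntegral.intervalIntegrable_rpow (a := 0) (b := x) (r := b) (μ := volume)
      (Or.inl hb.le)).const_mul (a * b)
    have h3 := this.1
    exact h3.mono_set Set.Ioo_subset_Ioc_self
  rw [← ofReal_integral_eq_lintegral_ofReal hint
    (ae_restrict_of_forall_mem measurableSet_Ioo (fun s hs => by
      have := hs.1.le; positivity))]
  congr 1
  rw [← MeasureTheory.integral_Ioc_eq_integral_Ioo,
    ← intervalIntegral.integral_of_le hx, intervalIntegral.integral_const_mul,
    integral_rpow (Or.inl (by linarith)), Real.zero_rpow hb1.ne', sub_zero]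
  ring

private theorem wphi (a b : ℝ) (ha : 0 < a) (hb : 0 < b) (μ n : Measure ℝ)
    (hpsi : ∀ y : ℝ, 0 ≤ y → dualHL μ n y = ENNReal.ofReal (a * b * y ^ (b + 1) / (b + 1)))
    (x : ℝ) (hx : 0 ≤ x) :
    phiHL μ n x = ENNReal.ofReal (((b + 1) * x / (a * b)) ^ (1 / (b + 1))) := by
  have hb1 : (0:ℝ) < b + 1 := by linarith
  have hab : (0:ℝ) < a * b := by positivity
  set c : ℝ := ((b + 1) * x / (a * b)) ^ (1 / (b + 1)) with hc
  have hbase : (0:ℝ) ≤ (b + 1) * x / (a * b) := by positivity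
  have hc0 : 0 ≤ c := Real.rpow_nonneg hbase _
  have key : ∀ y : ℝ, 0 ≤ y →
      (x < a * b * y ^ (b + 1) / (b + 1) ↔ (b + 1) * x / (a * b) < y ^ (b + 1)) := by
    intro y hy
    rw [lt_div_iff₀ hb1, div_lt_iff₀ hab]
    constructor <;> intro h <;> nlinarith [h]
  have hS : {y : ℝ | 0 < y ∧ ENNReal.ofReal x < dualHL μ n y} = Set.Ioi c := by
    ext y
    simp only [Set.mem_setOf_eq, Set.mem_Ioi]
    constructor
    · rintro ⟨hy0, hlt⟩
      rw [hpsi y hy0.le, ENNReal.ofReal_lt_ofReal_iff_of_nonneg hx] at hlt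
      have h4 : (b + 1) * x / (a * b) < y ^ (b + 1) := (key y hy0.le).mp hlt
      have h5 : c < (y ^ (b + 1)) ^ (1 / (b + 1)) :=
        Real.rpow_lt_rpow hbase h4 (by positivity)
      rwa [one_div, Real.rpow_rpow_inv hy0.le hb1.ne'] at h5
    · intro hy
      have hy0 : 0 < y := hc0.trans_lt hy
      refine ⟨hy0, ?_⟩
      rw [hpsi y hy0.le, ENNReal.ofReal_lt_ofReal_iff_of_nonneg hx, key y hy0.le]
      have h5 : c ^ (b + 1) < y ^ (b + 1) := Real.rpow_lt_rpow hc0 hy hb1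
      rwa [hc, one_div, Real.rpow_inv_rpow hbase hb1.ne'] at h5
  rw [phiHL, hS, if_pos ⟨c + 1, lt_add_one c⟩, csInf_Ioi]

/-- Weibull law: for `μ` with density `a·b·x^{b−1}·e^{−a·x^b}` on `(0,∞)`
and `n` with density `x⁻²` on `(0,∞)` (so `n([s,∞)) = 1/s`),
`ψ_μ(x) = a·b·x^{b+1}/(b+1)` and `φ_μ(x) = ((b+1)·x/(a·b))^{1/(b+1)}` for `x ≥ 0`;
in particular for the exponential law with parameter `a` (`b = 1`), `φ_μ(x) = √(2x/a)`. -/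
theorem weibullDualHL (a b : ℝ) (ha : 0 < a) (hb : 0 < b)
    (μ n : MeasureTheory.Measure ℝ)
    (hμ : μ = (MeasureTheory.volume.restrict (Set.Ioi (0 : ℝ))).withDensity
        (fun x => ENNReal.ofReal (a * b * x ^ (b - 1) * Real.exp (-(a * x ^ b)))))
    (hn : n = (MeasureTheory.volume.restrict (Set.Ioi (0 : ℝ))).withDensity
        (fun x => ENNReal.ofReal ((x ^ 2)⁻¹))) :
    (∀ x : ℝ, 0 ≤ x → dualHL μ n x = ENNReal.ofReal (a * b * x ^ (b + 1) / (b + 1))) ∧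
    (∀ x : ℝ, 0 ≤ x →
        phiHL μ n x = ENNReal.ofReal (((b + 1) * x / (a * b)) ^ (1 / (b + 1)))) ∧
    (b = 1 → ∀ x : ℝ, 0 ≤ x → phiHL μ n x = ENNReal.ofReal (Real.sqrt (2 * x / a))) := by
  have hμIci : ∀ t : ℝ, 0 < t → μ (Set.Ici t) = ENNReal.ofReal (Real.exp (-(a * t ^ b))) := by
    intro t ht
    rw [hμ, withDensity_apply _ measurableSet_Ici, Measure.restrict_restrict measurableSet_Ici]
    have hset : Set.Ici t ∩ Set.Ioi 0 = Set.Ici t := by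
      rw [Set.inter_eq_left]; exact fun x hx => ht.trans_le hx
    rw [hset, ← weib_tail a b ha hb ht]
    exact setLIntegral_congr (Ioi_ae_eq_Ici (a := t)).symm
  have hnIci : ∀ t : ℝ, 0 < t → n (Set.Ici t) = ENNReal.ofReal t⁻¹ := by
    intro t ht
    rw [hn, withDensity_apply _ measurableSet_Ici, Measure.restrict_restrict measurableSet_Ici]
    have hset : Set.Ici t ∩ Set.Ioi 0 = Set.Ici t := by
      rw [Set.inter_eq_left]; exact fun x hx => ht.trans_le hx
    rw [hset, ← inv_tail ht]
    exact setLIntegral_congr (Ioi_ae_eq_Ici (a := t)).symm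
  have hatom : ∀ t : ℝ, μ {t} = 0 := by
    intro t
    rw [hμ, withDensity_apply _ (measurableSet_singleton t)]
    have h0 : (MeasureTheory.volume.restrict (Set.Ioi (0:ℝ))) {t} = 0 := by
      rw [Measure.restrict_apply (measurableSet_singleton t)]
      exact measure_mono_null Set.inter_subset_left (measure_singleton t)
    rw [Measure.restrict_eq_zero.mpr h0, lintegral_zero_measure]
  have hψ : ∀ x : ℝ, 0 ≤ x → dualHL μ n x = ENNReal.ofReal (a * b * x ^ (b + 1) / (b + 1)) :=
    fun x hx => wpsi a b ha hb μ n hμ hμIci hnIci hatom x hx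
  refine ⟨hψ, fun x hx => wphi a b ha hb μ n hψ x hx, ?_⟩
  intro hb1 x hx
  subst hb1
  rw [wphi a 1 ha hb μ n hψ x hx]
  congr 1
  rw [Real.sqrt_eq_rpow]
  norm_num
end
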